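/- arXiv:cs/0607131 — 5 statements merged into one kernel-verified Lean document; each statement's English description precedes it below -/
import Mathlib

section
/- In the code-generation model, let j ∈ {1,…,n} and let y be any {0,1}^m-valued random variable that is conditionally independent of the row (X_{j1},…,X_{jm}) given (p_1,…,p_m). Let ε1 ∈ (0,1), A, B > 0, c0 ≥ 1 an integer, m = A·c0²·⌈ln(1/ε1)⌉ (assumed an integer) and Z = B·c0·⌈ln(1/ε1)⌉. If c0 ≥ B·g1(t)/(3.4·ν·A), then P[S_j > Z] ≤ ε1^{B²/(4·ν·A)}. In particular, if moreover A ≤ B²/(4ν), then P[S_j > Z] ≤ ε1. -/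
open MeasureTheory ProbabilityTheory Real
open scoped ENNReal Classical

noncomputable section

/-- Bernoulli measure on `Bool` with parameter `p`. -/
def bern (p : ℝ) : Measure Bool :=
  ENNReal.ofReal p • Measure.dirac true + ENNReal.ofReal (1 - p) • Measure.dirac false

/-- The measure on `ℝ` with density `f` (w.r.t. Lebesgue measure). -/
def biasMeasure (f : ℝ → ℝ) : Measure ℝ :=
  MeasureTheory.volume.withDensity fun p => ENNReal.ofReal (f p)

/-- Joint law of the biases `p = (p_1,…,p_m)` (i.i.d. with density `f`) together with the
code matrix `X` whose entries `X j i` are, conditionally on `p`, independent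
Bernoulli(`p i`). -/
def codeMeasure (n m : ℕ) (f : ℝ → ℝ) :
    Measure ((Fin m → ℝ) × (Fin n → Fin m → Bool)) :=
  (Measure.pi fun _ : Fin m => biasMeasure f).bind fun p =>
    (Measure.dirac p).prod (Measure.pi fun _ : Fin n => Measure.pi fun i : Fin m => bern (p i))

/-- The accusation sum `S_j = Σ_i y_i · (g1 (p_i) if X_{ji} = 1, g0 (p_i) if X_{ji} = 0)`. -/
def accusation (m : ℕ) (g1 g0 : ℝ → ℝ) (p : Fin m → ℝ) (x : Fin m → Bool)
    (y : Fin m → Bool) : ℝ :=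
  ∑ i, if y i then (if x i then g1 (p i) else g0 (p i)) else 0

lemma bern_singleton (q : ℝ) (b : Bool) :
    bern q {b} = ENNReal.ofReal (if b then q else 1 - q) := by
  cases b <;> simp [bern, Measure.dirac_apply]

lemma bern_univ (q : ℝ) (h0 : 0 ≤ q) (h1 : q ≤ 1) : bern q Set.univ = 1 := by
  simp only [bern, Measure.add_apply, Measure.smul_apply, Measure.dirac_apply,
    Set.mem_univ, Set.indicator_of_mem, Pi.one_apply, smul_eq_mul, mul_one]
  rw [← ENNReal.ofReal_add h0 (by linarith)]
  norm_num

lemma bern_prob (q : ℝ) (h0 : 0 ≤ q) (h1 : q ≤ 1) : IsProbabilityMeasure (bern q) :=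
  ⟨bern_univ q h0 h1⟩

lemma exp_le_one_add_add_sq {x : ℝ} (hx : x ≤ 1.7) : Real.exp x ≤ 1 + x + x ^ 2 := by
  rcases le_or_gt x (-1) with h | h
  · have h2 : Real.exp x ≤ 1 := Real.exp_le_one_iff.mpr (by linarith)
    nlinarith
  rcases le_or_gt x 1 with h1 | h1
  · have hb := Real.exp_bound (x := x) (by rw [abs_le]; constructor <;> linarith) (n := 2) (by norm_num)
    simp [Finset.sum_range_succ] at hb
    rw [abs_le] at hb
    nlinarith [hb.2, sq_abs x, sq_nonneg x]
  · have hcvx := convexOn_exp.2 (Set.mem_univ (1:ℝ)) (Set.mem_univ (1.7:ℝ))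
      (show (0:ℝ) ≤ (1.7 - x)/0.7 from div_nonneg (by linarith) (by norm_num))
      (show (0:ℝ) ≤ (x - 1)/0.7 from div_nonneg (by linarith) (by norm_num))
      (show (1.7 - x)/0.7 + (x - 1)/0.7 = 1 by ring)
    have hx17 : Real.exp 1.7 ≤ 5.5119 := by
      have h85 : Real.exp (17/20) ≤ 2.34773 := by
        have hb := Real.exp_bound (x := (17/20:ℝ)) (by rw [abs_le]; norm_num) (n := 3) (by norm_num)
        rw [abs_le, abs_of_nonneg (by norm_num : (0:ℝ) ≤ 17/20)] at hb
        norm_num [Finset.sum_range_succ, Nat.factorial] at hb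
        nlinarith [hb.2]
      have h2 : Real.exp 1.7 = Real.exp (17/20) * Real.exp (17/20) := by
        rw [← Real.exp_add]; norm_num
      nlinarith [Real.exp_pos (17/20:ℝ)]
    have he1 : Real.exp 1 ≤ 2.7182818286 := Real.exp_one_lt_d9.le
    simp only [smul_eq_mul] at hcvx
    have harg : (1.7 - x)/0.7 * 1 + (x - 1)/0.7 * 1.7 = x := by ring
    rw [harg, div_mul_eq_mul_div, div_mul_eq_mul_div, ← add_div,
      le_div_iff₀ (by norm_num : (0:ℝ) < 0.7)] at hcvx
    nlinarith [hcvx, mul_le_mul_of_nonneg_left he1 (by linarith : (0:ℝ) ≤ 1.7 - x),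
      mul_le_mul_of_nonneg_left hx17 (by linarith : (0:ℝ) ≤ x - 1),
      sq_nonneg (x - 1.4955)]

lemma factor_bound {a q u v : ℝ} (hq0 : 0 < q) (hq1 : q < 1) (hu : 0 < u)
    (hv : v = -q * u / (1 - q)) (ha : 0 ≤ a) (hle : a * u ≤ 1.7) :
    q * Real.exp (a * u) + (1 - q) * Real.exp (a * v) ≤ 1 + a^2 * (q * u^2 + (1-q) * v^2) := by
  have hvneg : v ≤ 0 := by
    rw [hv]
    apply div_nonpos_of_nonpos_of_nonneg <;> nlinarith
  have h1 := exp_le_one_add_add_sq hle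
  have h0 := exp_le_one_add_add_sq (show a * v ≤ 1.7 by nlinarith)
  have h1q : (1:ℝ) - q ≠ 0 := by linarith
  have hmean : q * u + (1 - q) * v = 0 := by
    rw [hv]; field_simp; ring
  have hmean2 : a * (q * u) + a * ((1 - q) * v) = 0 := by
    have : a * (q * u + (1 - q) * v) = 0 := by rw [hmean]; ring
    linarith [this]
  nlinarith [mul_le_mul_of_nonneg_left h1 hq0.le,
    mul_le_mul_of_nonneg_left h0 (by linarith : (0:ℝ) ≤ 1 - q), hmean2]

lemma meas_eq_sum {γ : Type*} [Fintype γ] [MeasurableSpace γ] [MeasurableSingletonClass γ]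
    (μ : Measure γ) (s : Set γ) :
    μ s = ∑ x : γ, s.indicator (fun x => μ {x}) x := by
  have hs : MeasurableSet s := (Set.toFinite s).measurableSet
  rw [← lintegral_indicator_one hs, lintegral_fintype]
  congr 1; ext x
  by_cases hx : x ∈ s <;> simp [Set.indicator, hx]

lemma pi_singleton {ι : Type*} [Fintype ι] {E : ι → Type*} [∀ i, MeasurableSpace (E i)]
    [∀ i, MeasurableSingletonClass (E i)] (μ : ∀ i, Measure (E i)) [∀ i, SigmaFinite (μ i)]
    (x : ∀ i, E i) : Measure.pi μ {x} = ∏ i, μ i {x i} := by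
  rw [← Measure.pi_pi]
  congr 1
  ext y
  simp [funext_iff, eq_comm]

lemma measurable_kernel {m n : ℕ} (β : (Fin m → ℝ) → Fin m → Measure Bool)
    (hβ : ∀ i b, Measurable fun p => β p i {b})
    (hprob : ∀ p i, IsProbabilityMeasure (β p i)) :
    Measurable fun p : Fin m → ℝ =>
      (Measure.dirac p).prod (Measure.pi fun _ : Fin n => Measure.pi fun i => β p i) := by
  apply Measure.measurable_of_measurable_coe
  intro s hs
  have key : ∀ p : Fin m → ℝ,
      (Measure.dirac p).prod (Measure.pi fun _ : Fin n => Measure.pi fun i => β p i) s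
      = ∑ X : Fin n → Fin m → Bool,
          (if (p, X) ∈ s then ∏ j', ∏ i, β p i {X j' i} else 0) := by
    intro p
    haveI : ∀ i, IsProbabilityMeasure (β p i) := hprob p
    haveI : ∀ j' : Fin n, SigmaFinite (Measure.pi fun i => β p i) := fun _ => inferInstance
    rw [Measure.prod_apply hs, lintegral_dirac' _ (measurable_measure_prodMk_left hs),
      meas_eq_sum]
    congr 1; ext X
    rw [Set.indicator_apply]
    simp only [Set.mem_preimage]
    congr 1
    rw [pi_singleton]
    congr 1; ext j'
    rw [pi_singleton]
  simp only [key]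
  apply Finset.measurable_sum
  intro X _
  apply Measurable.ite ((measurable_id.prodMk measurable_const) hs)
  · exact Finset.measurable_prod _ fun j' _ => Finset.measurable_prod _ fun i _ => hβ i _
  · exact measurable_const

lemma lintegral_pi_prod {ι : Type*} [Fintype ι] [DecidableEq ι] {E : Type*} [MeasurableSpace E]
    [Nonempty E] (μ : Measure E) [SigmaFinite μ] (φ : ι → E → ℝ≥0∞)
    (hφ : ∀ i, Measurable (φ i)) :
    ∫⁻ x : ι → E, ∏ i, φ i (x i) ∂(Measure.pi fun _ => μ) = ∏ i, ∫⁻ b, φ i b ∂μ := by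
  have hF : Measurable fun y : ι → E => ∏ i, φ i (y i) :=
    Finset.measurable_prod _ fun i _ => (hφ i).comp (measurable_pi_apply i)
  have claim : ∀ s : Finset ι, ∀ x : ι → E,
      (∫⋯∫⁻_s, (fun y => ∏ i, φ i (y i)) ∂(fun _ => μ)) x
        = (∏ i ∈ s, ∫⁻ b, φ i b ∂μ) * ∏ i ∈ sᶜ, φ i (x i) := by
    intro s
    induction s using Finset.induction_on with
    | empty => intro x; simp
    | @insert a s ha ih =>
      intro x
      rw [lmarginal_insert _ hF ha]
      have : ∀ xa : E, (∫⋯∫⁻_s, (fun y => ∏ i, φ i (y i)) ∂(fun _ => μ)) (Function.update x a xa)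
          = ((∏ i ∈ s, ∫⁻ b, φ i b ∂μ) * ∏ i ∈ sᶜ.erase a, φ i (x i)) * φ a xa := by
        intro xa
        rw [ih]
        have hac : a ∈ sᶜ := Finset.mem_compl.mpr ha
        rw [← Finset.mul_prod_erase sᶜ _ hac]
        have : ∏ i ∈ sᶜ.erase a, φ i (Function.update x a xa i)
            = ∏ i ∈ sᶜ.erase a, φ i (x i) := by
          apply Finset.prod_congr rfl
          intro i hi
          rw [Function.update_of_ne (Finset.ne_of_mem_erase hi)]
        rw [this, Function.update_self]
        ring
      simp only [this]
      rw [lintegral_const_mul _ (hφ a), Finset.prod_insert ha, Finset.compl_insert]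
      ring
  inhabit (ι → E)
  rw [lintegral_eq_lmarginal_univ (default : ι → E), claim]
  simp

set_option maxHeartbeats 1000000 in
/-- soundness of the generalized Tardos scheme. In the code-generation model,
with `y` conditionally independent of row `j` given `p` (modelled as `y = ρ p X r` with `ρ`
not depending on row `j`, and `r` independent auxiliary randomness), if
`m = A·c0²·⌈ln (1/ε1)⌉`, `Z = B·c0·⌈ln (1/ε1)⌉` and `c0 ≥ B·g1 t / (3.4·ν·A)`, then
`P[S_j > Z] ≤ ε1 ^ (B²/(4νA))`; if moreover `A ≤ B²/(4ν)` then `P[S_j > Z] ≤ ε1`. -/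
theorem soundness_condition
    (n m : ℕ) (hn : 1 ≤ n) (hm : 1 ≤ m)
    (t : ℝ) (ht : t ∈ Set.Ioo (0:ℝ) (1/2))
    (f : ℝ → ℝ) (hf_meas : Measurable f) (hf_nonneg : ∀ p, 0 ≤ f p)
    (hf_supp : ∀ p, p ∉ Set.Icc t (1-t) → f p = 0)
    (hf_prob : IsProbabilityMeasure (biasMeasure f))
    (g1 : ℝ → ℝ) (hg1_meas : Measurable g1)
    (hg1_pos : ∀ p ∈ Set.Ioo (0:ℝ) 1, 0 < g1 p)
    (hg1_anti : AntitoneOn g1 (Set.Ioo (0:ℝ) 1))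
    (g0 : ℝ → ℝ) (hg0 : ∀ p, g0 p = - p * g1 p / (1 - p))
    (ν : ℝ)
    (hν : ν = ∫ p in Set.Icc t (1-t), f p * (p * g1 p ^ 2 + (1-p) * g0 p ^ 2))
    (Ω' : Type*) [MeasurableSpace Ω'] (μ' : Measure Ω') [IsProbabilityMeasure μ']
    (j : Fin n)
    (ρ : (Fin m → ℝ) → (Fin n → Fin m → Bool) → Ω' → (Fin m → Bool))
    (hρ_meas : Measurable
      (fun q : ((Fin m → ℝ) × (Fin n → Fin m → Bool)) × Ω' => ρ q.1.1 q.1.2 q.2))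
    (hρ_indep : ∀ p X X' r, (∀ j' : Fin n, j' ≠ j → X j' = X' j') → ρ p X r = ρ p X' r)
    (ε1 : ℝ) (hε1 : ε1 ∈ Set.Ioo (0:ℝ) 1)
    (A B : ℝ) (hA : 0 < A) (hB : 0 < B)
    (c0 : ℕ) (hc0 : 1 ≤ c0)
    (hmA : (m:ℝ) = A * (c0:ℝ)^2 * (⌈Real.log (1/ε1)⌉ : ℝ))
    (Z : ℝ) (hZ : Z = B * (c0:ℝ) * (⌈Real.log (1/ε1)⌉ : ℝ))
    (hc0' : B * g1 t / (3.4 * ν * A) ≤ (c0:ℝ)) :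
    ((codeMeasure n m f).prod μ')
        {q | Z < accusation m g1 g0 q.1.1 (q.1.2 j) (ρ q.1.1 q.1.2 q.2)}
        ≤ ENNReal.ofReal (ε1 ^ (B^2 / (4 * ν * A)))
    ∧ (A ≤ B^2 / (4 * ν) →
      ((codeMeasure n m f).prod μ')
        {q | Z < accusation m g1 g0 q.1.1 (q.1.2 j) (ρ q.1.1 q.1.2 q.2)}
        ≤ ENNReal.ofReal ε1) := by
  classical
  obtain ⟨ht0, ht12⟩ := ht
  obtain ⟨hε0, hε11⟩ := hε1
  have h1t : t < 1 - t := by linarith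
  have hIccIoo : Set.Icc t (1-t) ⊆ Set.Ioo (0:ℝ) 1 :=
    fun q hq => ⟨lt_of_lt_of_le ht0 hq.1, by have := hq.2; linarith⟩
  set σ : ℝ → ℝ := fun q => q * g1 q ^ 2 + (1-q) * g0 q ^ 2 with hσdef
  have hg0_meas : Measurable g0 := by
    have hrw : g0 = fun q => -q * g1 q / (1 - q) := funext hg0
    rw [hrw]
    exact (measurable_id.neg.mul hg1_meas).div (measurable_const.sub measurable_id)
  have hσ_meas : Measurable σ :=
    (measurable_id.mul (hg1_meas.pow_const 2)).add
      ((measurable_const.sub measurable_id).mul (hg0_meas.pow_const 2))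
  have hσ_nonneg : ∀ q ∈ Set.Icc t (1-t), 0 ≤ σ q := by
    intro q hq
    have h := hIccIoo hq
    have := sq_nonneg (g1 q); have := sq_nonneg (g0 q)
    simp only [hσdef]
    nlinarith [h.1, h.2]
  set clamp : ℝ → ℝ := fun x => max t (min (1-t) x) with hclampdef
  have hclamp_mem : ∀ x, clamp x ∈ Set.Icc t (1-t) :=
    fun x => ⟨le_max_left _ _, max_le h1t.le (min_le_left _ _)⟩
  have hclamp_id : ∀ x ∈ Set.Icc t (1-t), clamp x = x := by
    intro x hx
    simp only [hclampdef]
    rw [min_eq_right hx.2, max_eq_right hx.1]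
  have hclamp_meas : Measurable clamp := measurable_const.max (measurable_const.min measurable_id)
  set κ' : (Fin m → ℝ) → Measure ((Fin m → ℝ) × (Fin n → Fin m → Bool)) :=
    fun p => (Measure.dirac p).prod
      (Measure.pi fun _ : Fin n => Measure.pi fun i : Fin m => bern (clamp (p i))) with hκ'def
  have hβprob : ∀ (p : Fin m → ℝ) (i : Fin m), IsProbabilityMeasure (bern (clamp (p i))) :=
    fun p i => bern_prob _ (le_trans ht0.le (hclamp_mem _).1)
      (by have := (hclamp_mem (p i)).2; linarith)
  have hκ'_meas : Measurable κ' := by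
    refine measurable_kernel (fun p i => bern (clamp (p i))) (fun i b => ?_) (fun p i => hβprob p i)
    simp only [bern_singleton]
    cases b
    · exact ENNReal.measurable_ofReal.comp
        (measurable_const.sub (hclamp_meas.comp (measurable_pi_apply i)))
    · exact ENNReal.measurable_ofReal.comp (hclamp_meas.comp (measurable_pi_apply i))
  haveI : IsProbabilityMeasure (biasMeasure f) := hf_prob
  have hGm : MeasurableSet {p : Fin m → ℝ | ∀ i, p i ∈ Set.Icc t (1-t)} := by
    have hrw : {p : Fin m → ℝ | ∀ i, p i ∈ Set.Icc t (1-t)}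
        = Set.pi Set.univ (fun _ => Set.Icc t (1-t)) := by
      ext p; simp only [Set.mem_setOf_eq, Set.mem_univ_pi]
    rw [hrw]; exact MeasurableSet.univ_pi fun _ => measurableSet_Icc
  have hIcc1 : biasMeasure f (Set.Icc t (1-t)) = 1 := by
    have hc : biasMeasure f (Set.Icc t (1-t))ᶜ = 0 := by
      rw [biasMeasure, withDensity_apply _ measurableSet_Icc.compl]
      rw [setLIntegral_congr_fun measurableSet_Icc.compl
        (fun x hx => by rw [hf_supp x hx, ENNReal.ofReal_zero])]
      simp
    have h2 := measure_add_measure_compl (μ := biasMeasure f) (s := Set.Icc t (1-t)) measurableSet_Icc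
    rw [hc, add_zero, measure_univ] at h2
    exact h2
  have hGae : ∀ᵐ p ∂(Measure.pi fun _ : Fin m => biasMeasure f),
      ∀ i, p i ∈ Set.Icc t (1-t) := by
    rw [ae_iff]
    have hcompl : {p : Fin m → ℝ | ¬ ∀ i, p i ∈ Set.Icc t (1-t)}
        = {p : Fin m → ℝ | ∀ i, p i ∈ Set.Icc t (1-t)}ᶜ := rfl
    rw [hcompl, prob_compl_eq_zero_iff hGm]
    have hrw : {p : Fin m → ℝ | ∀ i, p i ∈ Set.Icc t (1-t)}
        = Set.pi Set.univ (fun _ => Set.Icc t (1-t)) := by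
      ext p; simp only [Set.mem_setOf_eq, Set.mem_univ_pi]
    rw [hrw, Measure.pi_pi]
    simp [hIcc1]
  have hbind : codeMeasure n m f = (Measure.pi fun _ : Fin m => biasMeasure f).bind κ' := by
    have hae : (fun p : Fin m → ℝ => (Measure.dirac p).prod
        (Measure.pi fun _ : Fin n => Measure.pi fun i : Fin m => bern (p i)))
        =ᵐ[Measure.pi fun _ : Fin m => biasMeasure f] κ' := by
      filter_upwards [hGae] with p hp
      simp only [hκ'def]
      have : (fun i : Fin m => bern (clamp (p i))) = fun i => bern (p i) := by
        funext i; rw [hclamp_id _ (hp i)]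
      rw [this]
    unfold codeMeasure Measure.bind
    rw [Measure.map_congr hae]
  haveI hκ'prob : ∀ p, IsProbabilityMeasure (κ' p) := by
    intro p
    haveI := hβprob p
    rw [hκ'def]
    infer_instance
  haveI hcodeprob : IsProbabilityMeasure (codeMeasure n m f) := by
    constructor
    rw [hbind, Measure.bind_apply MeasurableSet.univ hκ'_meas.aemeasurable]
    have hone : ∀ p : Fin m → ℝ, κ' p Set.univ = 1 := fun p => measure_univ
    simp only [hone]
    simp
  by_cases hInt : IntegrableOn
      (fun q => f q * (q * g1 q ^ 2 + (1-q) * g0 q ^ 2)) (Set.Icc t (1-t)) volume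
  case neg =>
    have hν0 : ν = 0 := by
      rw [hν]; exact integral_undef hInt
    constructor
    · have hz : B^2 / (4 * ν * A) = 0 := by rw [hν0]; simp
      rw [hz, Real.rpow_zero]
      simp only [ENNReal.ofReal_one]
      exact prob_le_one
    · intro hA'
      rw [hν0] at hA'
      simp only [mul_zero, div_zero] at hA'
      linarith
  case pos =>
    have hrestr_nonneg : 0 ≤ᵐ[volume.restrict (Set.Icc t (1-t))]
        fun q => f q * (q * g1 q ^ 2 + (1-q) * g0 q ^ 2) :=
      (ae_restrict_iff' measurableSet_Icc).2 (ae_of_all _ fun q hq =>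
        mul_nonneg (hf_nonneg q) (hσ_nonneg q hq))
    have hνofReal : ENNReal.ofReal ν
        = ∫⁻ q in Set.Icc t (1-t), ENNReal.ofReal (f q * (q * g1 q ^ 2 + (1-q) * g0 q ^ 2)) := by
      rw [hν]; exact ofReal_integral_eq_lintegral_ofReal hInt hrestr_nonneg
    have hg1t' : 0 < g1 (1-t) := hg1_pos _ ⟨by linarith, by linarith⟩
    set c' : ℝ := t * g1 (1-t)^2 with hc'def
    have hc'pos : 0 < c' := by rw [hc'def]; exact mul_pos ht0 (pow_pos hg1t' 2)
    have hσ_lb : ∀ q ∈ Set.Icc t (1-t), c' ≤ σ q := by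
      intro q hq
      have hqI := hIccIoo hq
      have hg1q : g1 (1-t) ≤ g1 q := hg1_anti hqI ⟨by linarith, by linarith⟩ hq.2
      have hg1qpos : 0 < g1 q := hg1_pos q hqI
      have hl1 : t * g1 (1-t)^2 ≤ q * g1 q ^ 2 :=
        mul_le_mul hq.1 (pow_le_pow_left₀ hg1t'.le hg1q 2) (by positivity)
          (le_trans ht0.le hq.1)
      have hl2 : 0 ≤ (1-q) * g0 q ^2 := by nlinarith [sq_nonneg (g0 q), hqI.2]
      simp only [hσdef]; nlinarith
    have hbm_meas : Measurable fun q : ℝ => ENNReal.ofReal (f q) :=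
      ENNReal.measurable_ofReal.comp hf_meas
    have hIccf : ∫⁻ q in Set.Icc t (1-t), ENNReal.ofReal (f q) ∂volume = 1 := by
      rw [← withDensity_apply _ measurableSet_Icc]
      exact hIcc1
    have hνlb : ENNReal.ofReal c' ≤ ENNReal.ofReal ν := by
      rw [hνofReal]
      calc ENNReal.ofReal c'
          = ∫⁻ q in Set.Icc t (1-t), ENNReal.ofReal (f q) * ENNReal.ofReal c' ∂volume := by
            rw [lintegral_mul_const _ hbm_meas, hIccf, one_mul]
        _ ≤ _ := by
            apply lintegral_mono_ae
            refine (ae_restrict_iff' measurableSet_Icc).2 (ae_of_all _ fun q hq => ?_)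
            rw [← ENNReal.ofReal_mul (hf_nonneg q)]
            exact ENNReal.ofReal_le_ofReal (mul_le_mul_of_nonneg_left (hσ_lb q hq) (hf_nonneg q))
    have hνpos : 0 < ν :=
      ENNReal.ofReal_pos.mp (lt_of_lt_of_le (ENNReal.ofReal_pos.mpr hc'pos) hνlb)
    have hc0pos : (0:ℝ) < c0 := by exact_mod_cast hc0
    set α : ℝ := B / (2 * ν * A * c0) with hαdef
    have hαpos : 0 < α := by rw [hαdef]; positivity
    have hαg1t : α * g1 t ≤ 1.7 := by
      have h3 : (0:ℝ) < 3.4 * ν * A := by positivity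
      have h34 : B * g1 t ≤ 3.4 * ν * A * c0 := by
        have hh := (div_le_iff₀ h3).1 hc0'
        calc B * g1 t ≤ (c0:ℝ) * (3.4 * ν * A) := hh
          _ = 3.4 * ν * A * c0 := by ring
      rw [hαdef, div_mul_eq_mul_div, div_le_iff₀ (by positivity : (0:ℝ) < 2 * ν * A * c0)]
      calc B * g1 t ≤ 3.4 * ν * A * c0 := h34
        _ = 1.7 * (2 * ν * A * c0) := by ring
    set F : ((Fin m → ℝ) × (Fin n → Fin m → Bool)) × Ω' → ℝ≥0∞ :=
      fun q => ENNReal.ofReal (Real.exp (α * accusation m g1 g0 q.1.1 (q.1.2 j)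
        (ρ q.1.1 q.1.2 q.2))) with hFdef
    have hacc_meas : Measurable (fun q : ((Fin m → ℝ) × (Fin n → Fin m → Bool)) × Ω' =>
        accusation m g1 g0 q.1.1 (q.1.2 j) (ρ q.1.1 q.1.2 q.2)) := by
      unfold accusation
      apply Finset.measurable_sum
      intro i _
      have hy : Measurable fun q : ((Fin m → ℝ) × (Fin n → Fin m → Bool)) × Ω' =>
          ρ q.1.1 q.1.2 q.2 i := (measurable_pi_apply i).comp hρ_meas
      have hx : Measurable fun q : ((Fin m → ℝ) × (Fin n → Fin m → Bool)) × Ω' =>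
          q.1.2 j i := (measurable_pi_apply i).comp
            ((measurable_pi_apply j).comp (measurable_snd.comp measurable_fst))
      have hp1 : Measurable fun q : ((Fin m → ℝ) × (Fin n → Fin m → Bool)) × Ω' =>
          q.1.1 i := (measurable_pi_apply i).comp (measurable_fst.comp measurable_fst)
      refine Measurable.ite (hy (measurableSet_singleton true)) ?_ measurable_const
      exact Measurable.ite (hx (measurableSet_singleton true)) (hg1_meas.comp hp1)
        (hg0_meas.comp hp1)
    have hF_meas : Measurable F := by
      rw [hFdef]
      exact ENNReal.measurable_ofReal.comp
        (Real.measurable_exp.comp (measurable_const.mul hacc_meas))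
    have hG2_meas : Measurable fun a : (Fin m → ℝ) × (Fin n → Fin m → Bool) =>
        ∫⁻ r, F (a, r) ∂μ' := hF_meas.lintegral_prod_right'
    have hlint : ∫⁻ q, F q ∂((codeMeasure n m f).prod μ')
        ≤ ENNReal.ofReal (Real.exp ((m:ℝ) * (α^2 * ν))) := by
      have hφ_meas : Measurable fun x : ℝ => ENNReal.ofReal (1 + α^2 * σ x) :=
        ENNReal.measurable_ofReal.comp (measurable_const.add (measurable_const.mul hσ_meas))
      have claimA : ∀ p : Fin m → ℝ, (∀ i, p i ∈ Set.Icc t (1-t)) →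
          ∫⁻ a, (∫⁻ r, F (a, r) ∂μ') ∂(κ' p)
            ≤ ∏ i, ENNReal.ofReal (1 + α^2 * σ (p i)) := by
        intro p hp
        haveI hprow : ∀ i : Fin m, IsProbabilityMeasure (bern (clamp (p i))) := hβprob p
        set w : Fin m → Bool → ℝ≥0∞ :=
          fun i b => ENNReal.ofReal (if b then p i else 1 - p i) with hwdef
        have hw_sum : ∀ i, w i true + w i false = 1 := by
          intro i
          rw [show w i true = ENNReal.ofReal (p i) by simp [hwdef],
            show w i false = ENNReal.ofReal (1 - p i) by simp [hwdef],
            ← ENNReal.ofReal_add (le_trans ht0.le (hp i).1)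
              (by have h2 := (hp i).2; have h0 := ht0; linarith)]
          norm_num
        have hΞsing : ∀ X : Fin n → Fin m → Bool,
            (Measure.pi fun _ : Fin n => Measure.pi fun i : Fin m => bern (clamp (p i))) {X}
            = ∏ j' : Fin n, ∏ i : Fin m, w i (X j' i) := by
          intro X
          rw [pi_singleton]
          refine Finset.prod_congr rfl fun j' _ => ?_
          rw [pi_singleton]
          refine Finset.prod_congr rfl fun i _ => ?_
          rw [bern_singleton, hclamp_id _ (hp i), hwdef]
        have hκ'eq : κ' p = (Measure.pi fun _ : Fin n =>
            Measure.pi fun i : Fin m => bern (clamp (p i))).map (Prod.mk p) := by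
          rw [hκ'def]; exact Measure.dirac_prod _
        rw [hκ'eq, lintegral_map hG2_meas measurable_prodMk_left, lintegral_fintype]
        simp only [hΞsing]
        have hFr_meas : ∀ X : Fin n → Fin m → Bool, Measurable fun r => F ((p, X), r) :=
          fun X => hF_meas.comp (measurable_const.prodMk measurable_id)
        have hswap : ∑ X : Fin n → Fin m → Bool,
            (∫⁻ r, F ((p, X), r) ∂μ') * (∏ j' : Fin n, ∏ i : Fin m, w i (X j' i))
            = ∫⁻ r, ∑ X : Fin n → Fin m → Bool,
                F ((p, X), r) * (∏ j' : Fin n, ∏ i : Fin m, w i (X j' i)) ∂μ' := by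
          rw [lintegral_finset_sum _ (fun X _ => (hFr_meas X).mul_const _)]
          refine Finset.sum_congr rfl fun X _ => ?_
          rw [lintegral_mul_const _ (hFr_meas X)]
        rw [hswap]
        have hbound : ∀ r : Ω', (∑ X : Fin n → Fin m → Bool,
            F ((p, X), r) * (∏ j' : Fin n, ∏ i : Fin m, w i (X j' i)))
            ≤ ∏ i, ENNReal.ofReal (1 + α^2 * σ (p i)) := by
          intro r
          set e := Equiv.funSplitAt j (Fin m → Bool) with hedef
          rw [← Equiv.sum_comp e.symm (fun X : Fin n → Fin m → Bool =>
            F ((p, X), r) * (∏ j' : Fin n, ∏ i : Fin m, w i (X j' i))), Fintype.sum_prod_type]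
          have hsymmj : ∀ (x : Fin m → Bool) (u : {a : Fin n // a ≠ j} → Fin m → Bool),
              e.symm (x, u) j = x := by
            intro x u
            rw [hedef, Equiv.funSplitAt_symm_apply, dif_pos rfl]
          have hsymmne : ∀ (x : Fin m → Bool) (u : {a : Fin n // a ≠ j} → Fin m → Bool)
              (a : {a : Fin n // a ≠ j}), e.symm (x, u) a.1 = u a := by
            intro x u a
            rw [hedef, Equiv.funSplitAt_symm_apply, dif_neg a.2, Subtype.coe_eta]
          have hy : ∀ x u, ρ p (e.symm (x, u)) r = ρ p (e.symm (fun _ => false, u)) r := by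
            intro x u
            apply hρ_indep
            intro j' hj'
            rw [show j' = (⟨j', hj'⟩ : {a : Fin n // a ≠ j}).1 from rfl, hsymmne, hsymmne]
          set y : ({a : Fin n // a ≠ j} → Fin m → Bool) → Fin m → Bool :=
            fun u => ρ p (e.symm (fun _ => false, u)) r with hydef
          have hWsplit : ∀ (x : Fin m → Bool) (u : {a : Fin n // a ≠ j} → Fin m → Bool),
              (∏ j' : Fin n, ∏ i : Fin m, w i (e.symm (x, u) j' i))
              = (∏ i, w i (x i)) * ∏ a : {a : Fin n // a ≠ j}, ∏ i, w i (u a i) := by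
            intro x u
            rw [← Finset.mul_prod_erase Finset.univ _ (Finset.mem_univ j), hsymmj]
            congr 1
            rw [Finset.prod_subtype (p := fun a : Fin n => a ≠ j) (Finset.univ.erase j)
              (fun a => by simp [Finset.mem_erase])
              (fun j' => ∏ i : Fin m, w i (e.symm (x, u) j' i))]
            exact Finset.prod_congr rfl fun a _ => by rw [hsymmne]
          have hterm : ∀ (x : Fin m → Bool) (u : {a : Fin n // a ≠ j} → Fin m → Bool),
              F ((p, e.symm (x, u)), r)
                * (∏ j' : Fin n, ∏ i : Fin m, w i (e.symm (x, u) j' i))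
              = (∏ a : {a : Fin n // a ≠ j}, ∏ i, w i (u a i)) *
                (ENNReal.ofReal (Real.exp (α * accusation m g1 g0 p x (y u)))
                  * ∏ i, w i (x i)) := by
            intro x u
            rw [hWsplit]
            have hFval : F ((p, e.symm (x, u)), r)
                = ENNReal.ofReal (Real.exp (α * accusation m g1 g0 p x (y u))) := by
              simp only [hFdef]
              rw [hsymmj, hy, hydef]
            rw [hFval]
            ring
          simp only [hterm]
          rw [Finset.sum_comm]
          simp_rw [← Finset.mul_sum]
          have claimC : ∀ v : Fin m → Bool,
              (∑ x : Fin m → Bool, ENNReal.ofReal (Real.exp (α * accusation m g1 g0 p x v))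
                * ∏ i, w i (x i))
              ≤ ∏ i, ENNReal.ofReal (1 + α^2 * σ (p i)) := by
            intro v
            have hexp : ∀ x : Fin m → Bool,
                ENNReal.ofReal (Real.exp (α * accusation m g1 g0 p x v)) * (∏ i, w i (x i))
                = ∏ i, (ENNReal.ofReal (Real.exp (α *
                    (if v i then (if x i then g1 (p i) else g0 (p i)) else 0))) * w i (x i)) := by
              intro x
              rw [accusation, Finset.mul_sum, Real.exp_sum,
                ENNReal.ofReal_prod_of_nonneg (fun i _ => (Real.exp_pos _).le),
                ← Finset.prod_mul_distrib]
            simp only [hexp]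
            have hps := Fintype.prod_sum (κ := fun _ : Fin m => Bool)
              (f := fun (i : Fin m) (b : Bool) => ENNReal.ofReal (Real.exp (α *
                (if v i then (if b then g1 (p i) else g0 (p i)) else 0))) * w i b)
            rw [← hps]
            apply Finset.prod_le_prod'
            intro i _
            rw [Fintype.sum_bool]
            have hpIoo := hIccIoo (hp i)
            have hσi := hσ_nonneg (p i) (hp i)
            cases hvi : v i with
            | false =>
              simp only [hvi, Bool.false_eq_true, if_false, mul_zero, Real.exp_zero,
                ENNReal.ofReal_one, one_mul]
              rw [hw_sum i]
              exact ENNReal.one_le_ofReal.mpr (by nlinarith [sq_nonneg α])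
            | true =>
              simp only [hvi, if_true, Bool.false_eq_true, if_false]
              have hle17 : α * g1 (p i) ≤ 1.7 := by
                have hanti : g1 (p i) ≤ g1 t :=
                  hg1_anti ⟨ht0, by linarith⟩ hpIoo (hp i).1
                calc α * g1 (p i) ≤ α * g1 t :=
                      mul_le_mul_of_nonneg_left hanti hαpos.le
                  _ ≤ 1.7 := hαg1t
              have hb := factor_bound hpIoo.1 hpIoo.2 (hg1_pos _ hpIoo) (hg0 (p i))
                hαpos.le hle17
              rw [show w i true = ENNReal.ofReal (p i) by simp [hwdef],
                show w i false = ENNReal.ofReal (1 - p i) by simp [hwdef]]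
              rw [← ENNReal.ofReal_mul (Real.exp_nonneg _),
                ← ENNReal.ofReal_mul (Real.exp_nonneg _),
                ← ENNReal.ofReal_add
                  (mul_nonneg (Real.exp_nonneg _) (by linarith [hpIoo.1]))
                  (mul_nonneg (Real.exp_nonneg _) (by linarith [hpIoo.2]))]
              apply ENNReal.ofReal_le_ofReal
              simp only [hσdef]
              nlinarith [hb]
          have hsumR : ∑ u : {a : Fin n // a ≠ j} → Fin m → Bool,
              ∏ a : {a : Fin n // a ≠ j}, ∏ i, w i (u a i) = 1 := by
            have hps2 := Fintype.prod_sum (κ := fun _ : {a : Fin n // a ≠ j} => Fin m → Bool)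
              (f := fun (_ : {a : Fin n // a ≠ j}) (v : Fin m → Bool) => ∏ i, w i (v i))
            rw [← hps2]
            have hV : (∑ v : Fin m → Bool, ∏ i, w i (v i)) = 1 := by
              have hps3 := Fintype.prod_sum (κ := fun _ : Fin m => Bool)
                (f := fun (i : Fin m) (b : Bool) => w i b)
              rw [← hps3]
              have hone : ∀ i : Fin m, (∑ b : Bool, w i b) = 1 := fun i => by
                rw [Fintype.sum_bool, hw_sum i]
              rw [Finset.prod_congr rfl fun i _ => hone i]
              exact Finset.prod_const_one
            rw [Finset.prod_congr rfl fun a _ => hV]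
            exact Finset.prod_const_one
          calc ∑ u : {a : Fin n // a ≠ j} → Fin m → Bool,
              (∏ a : {a : Fin n // a ≠ j}, ∏ i, w i (u a i)) *
                (∑ x : Fin m → Bool,
                  ENNReal.ofReal (Real.exp (α * accusation m g1 g0 p x (y u)))
                    * ∏ i, w i (x i))
              ≤ ∑ u : {a : Fin n // a ≠ j} → Fin m → Bool,
                (∏ a : {a : Fin n // a ≠ j}, ∏ i, w i (u a i)) *
                  (∏ i, ENNReal.ofReal (1 + α^2 * σ (p i))) :=
              Finset.sum_le_sum fun u _ => mul_le_mul_right (claimC (y u)) _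
            _ = (∑ u : {a : Fin n // a ≠ j} → Fin m → Bool,
                ∏ a : {a : Fin n // a ≠ j}, ∏ i, w i (u a i)) *
                  (∏ i, ENNReal.ofReal (1 + α^2 * σ (p i))) := by
              rw [← Finset.sum_mul]
            _ = ∏ i, ENNReal.ofReal (1 + α^2 * σ (p i)) := by
              rw [hsumR, one_mul]
        calc ∫⁻ r, (∑ X : Fin n → Fin m → Bool,
              F ((p, X), r) * (∏ j' : Fin n, ∏ i : Fin m, w i (X j' i))) ∂μ'
            ≤ ∫⁻ _r, (∏ i, ENNReal.ofReal (1 + α^2 * σ (p i))) ∂μ' :=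
              lintegral_mono hbound
          _ = ∏ i, ENNReal.ofReal (1 + α^2 * σ (p i)) := by
            rw [lintegral_const, measure_univ, mul_one]
      have hfactor : ∫⁻ x, ENNReal.ofReal (1 + α^2 * σ x) ∂(biasMeasure f)
          ≤ ENNReal.ofReal (Real.exp (α^2 * ν)) := by
        rw [biasMeasure, lintegral_withDensity_eq_lintegral_mul _ hbm_meas hφ_meas]
        have hσofReal_meas : Measurable fun x : ℝ => ENNReal.ofReal (σ x) :=
          ENNReal.measurable_ofReal.comp hσ_meas
        have hpt : ∀ x : ℝ,
            ((fun x => ENNReal.ofReal (f x)) * fun x => ENNReal.ofReal (1 + α^2 * σ x)) x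
            = ENNReal.ofReal (f x) + ENNReal.ofReal (α^2)
                * (ENNReal.ofReal (f x) * ENNReal.ofReal (σ x)) := by
          intro x
          simp only [Pi.mul_apply]
          by_cases hx0 : f x = 0
          · simp [hx0]
          · have hxI : x ∈ Set.Icc t (1-t) := by
              by_contra hxn
              exact hx0 (hf_supp x hxn)
            have hσx := hσ_nonneg x hxI
            rw [ENNReal.ofReal_add (by norm_num) (by positivity), ENNReal.ofReal_one,
              mul_add, mul_one, ENNReal.ofReal_mul (sq_nonneg α)]
            ring
        rw [lintegral_congr hpt, lintegral_add_left hbm_meas,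
          lintegral_const_mul _ (show Measurable fun x => ENNReal.ofReal (f x) * ENNReal.ofReal (σ x) from hbm_meas.mul hσofReal_meas)]
        have h1 : ∫⁻ x, ENNReal.ofReal (f x) ∂volume = 1 := by
          have huniv := hf_prob.measure_univ
          rw [biasMeasure, withDensity_apply _ MeasurableSet.univ,
            Measure.restrict_univ] at huniv
          exact huniv
        have h2 : ∫⁻ x, ENNReal.ofReal (f x) * ENNReal.ofReal (σ x) ∂volume
            = ENNReal.ofReal ν := by
          have hind : (fun x => ENNReal.ofReal (f x) * ENNReal.ofReal (σ x))
              = Set.indicator (Set.Icc t (1-t))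
                  (fun x => ENNReal.ofReal (f x * (x * g1 x ^ 2 + (1-x) * g0 x ^ 2))) := by
            funext x
            by_cases hx : x ∈ Set.Icc t (1-t)
            · rw [Set.indicator_of_mem hx, ENNReal.ofReal_mul (hf_nonneg x)]
            · rw [Set.indicator_of_notMem hx, hf_supp x hx]
              simp
          rw [hind, lintegral_indicator measurableSet_Icc, ← hνofReal]
        rw [h1, h2, ← ENNReal.ofReal_mul (sq_nonneg α)]
        calc 1 + ENNReal.ofReal (α^2 * ν) = ENNReal.ofReal (1 + α^2 * ν) := by
              rw [ENNReal.ofReal_add (by norm_num) (by positivity), ENNReal.ofReal_one]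
          _ ≤ ENNReal.ofReal (Real.exp (α^2 * ν)) :=
              ENNReal.ofReal_le_ofReal (by nlinarith [Real.add_one_le_exp (α^2 * ν)])
      rw [MeasureTheory.lintegral_prod _ hF_meas.aemeasurable, hbind,
        Measure.lintegral_bind hκ'_meas.aemeasurable hG2_meas.aemeasurable]
      calc ∫⁻ p, ∫⁻ a, (∫⁻ r, F (a, r) ∂μ') ∂(κ' p)
            ∂(Measure.pi fun _ : Fin m => biasMeasure f)
          ≤ ∫⁻ p, (∏ i, ENNReal.ofReal (1 + α^2 * σ (p i)))
            ∂(Measure.pi fun _ : Fin m => biasMeasure f) :=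
            lintegral_mono_ae (hGae.mono fun p hp => claimA p hp)
        _ = ∏ _i : Fin m, ∫⁻ x, ENNReal.ofReal (1 + α^2 * σ x) ∂(biasMeasure f) :=
            lintegral_pi_prod (biasMeasure f) _ (fun _ => hφ_meas)
        _ ≤ ∏ _i : Fin m, ENNReal.ofReal (Real.exp (α^2 * ν)) :=
            Finset.prod_le_prod' fun _ _ => hfactor
        _ = ENNReal.ofReal (Real.exp (α^2 * ν)) ^ m := by
            rw [Finset.prod_const, Finset.card_univ, Fintype.card_fin]
        _ = ENNReal.ofReal (Real.exp (α^2 * ν) ^ m) :=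
            (ENNReal.ofReal_pow (Real.exp_nonneg _) m).symm
        _ = ENNReal.ofReal (Real.exp ((m:ℝ) * (α^2 * ν))) := by
            rw [← Real.exp_nat_mul]
    set Zε := ENNReal.ofReal (Real.exp (α * Z)) with hZεdef
    have hZε0 : Zε ≠ 0 := by
      rw [hZεdef]; exact (ENNReal.ofReal_pos.mpr (Real.exp_pos _)).ne'
    have hZεtop : Zε ≠ ⊤ := ENNReal.ofReal_ne_top
    have hmark := mul_meas_ge_le_lintegral₀ (μ := (codeMeasure n m f).prod μ')
      hF_meas.aemeasurable Zε
    have hsub : {q : ((Fin m → ℝ) × (Fin n → Fin m → Bool)) × Ω' |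
        Z < accusation m g1 g0 q.1.1 (q.1.2 j) (ρ q.1.1 q.1.2 q.2)} ⊆ {q | Zε ≤ F q} := by
      intro q hq
      simp only [Set.mem_setOf_eq] at hq ⊢
      rw [hFdef, hZεdef]
      exact ENNReal.ofReal_le_ofReal (Real.exp_le_exp.mpr
        (mul_le_mul_of_nonneg_left (le_of_lt hq) hαpos.le))
    have hmain : ((codeMeasure n m f).prod μ')
        {q | Z < accusation m g1 g0 q.1.1 (q.1.2 j) (ρ q.1.1 q.1.2 q.2)}
        ≤ ENNReal.ofReal (Real.exp ((m:ℝ) * (α^2 * ν) - α * Z)) := by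
      have h1 : ((codeMeasure n m f).prod μ')
          {q | Z < accusation m g1 g0 q.1.1 (q.1.2 j) (ρ q.1.1 q.1.2 q.2)} * Zε
          ≤ ENNReal.ofReal (Real.exp ((m:ℝ) * (α^2 * ν))) := by
        refine le_trans (mul_le_mul_left (measure_mono hsub) Zε) ?_
        rw [mul_comm]
        exact le_trans hmark hlint
      have h2 := (ENNReal.le_div_iff_mul_le (Or.inl hZε0) (Or.inl hZεtop)).2 h1
      refine le_trans h2 ?_
      rw [hZεdef, ← ENNReal.ofReal_div_of_pos (Real.exp_pos _), ← Real.exp_sub]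
    set cexp : ℝ := B^2 / (4 * ν * A) with hcdef
    have hcnn : 0 ≤ cexp := by rw [hcdef]; positivity
    have hL : Real.log (1/ε1) ≤ (⌈Real.log (1/ε1)⌉ : ℝ) := Int.le_ceil _
    have harith : (m:ℝ) * (α^2 * ν) - α * Z = -((⌈Real.log (1/ε1)⌉ : ℝ) * cexp) := by
      rw [hmA, hZ, hcdef, hαdef]
      field_simp
      ring
    have hfinal1 : Real.exp ((m:ℝ) * (α^2 * ν) - α * Z) ≤ ε1 ^ cexp := by
      rw [harith, Real.rpow_def_of_pos hε0]
      apply Real.exp_le_exp.mpr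
      have hlog : Real.log (1/ε1) = - Real.log ε1 := by rw [one_div, Real.log_inv]
      nlinarith [mul_le_mul_of_nonneg_right hL hcnn]
    constructor
    · exact le_trans hmain (ENNReal.ofReal_le_ofReal hfinal1)
    · intro hA'
      refine le_trans hmain (ENNReal.ofReal_le_ofReal ?_)
      refine le_trans hfinal1 ?_
      have h1c : 1 ≤ cexp := by
        rw [hcdef, show 4 * ν * A = (4*ν) * A by ring, ← div_div]
        exact (one_le_div hA).2 hA'
      calc ε1 ^ cexp ≤ ε1 ^ (1:ℝ) :=
            Real.rpow_le_rpow_of_exponent_ge hε0 hε11.le h1c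
        _ = ε1 := Real.rpow_one ε1



end
end

section
/- Let t ∈ (0,1/2) and let s: [t,1/2] → [0,∞) be measurable with I := ∫_t^{1/2} s(p)/√(p(1−p)) dp ∈ (0,∞). Then for every measurable f: [t,1/2] → (0,∞) with ∫_t^{1/2} f(p) dp = 1/2, one has ν[s,f] := 2·∫_t^{1/2} s(p)²/(p(1−p)·f(p)) dp ≥ 4·I², with equality if and only if f(p) = s(p)/(2·I·√(p(1−p))) for almost every p ∈ [t,1/2]. In the equality case the corresponding accusation function g1(p) = s(p)/(p·f(p)) equals 2·I·√((1−p)/p), a positive multiple of Tardos' g1^T(p) = √((1−p)/p); that is, for every fixed s = p·f·g1, the quantity ν is minimized exactly when g1 is a positive multiple of g1^T. -/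
open MeasureTheory Real
open scoped ENNReal

/-- for fixed `s = p·f·g1`, the functional
`ν[s,f] = 2·∫_t^{1/2} s(p)²/(p(1-p)·f(p)) dp` over normalized densities `f`
(`∫_t^{1/2} f = 1/2`) satisfies `ν[s,f] ≥ 4·I²` with
`I = ∫_t^{1/2} s(p)/√(p(1-p)) dp ∈ (0,∞)`, with equality iff
`f(p) = s(p)/(2I√(p(1-p)))` a.e.; in the equality case the accusation function
`g1(p) = s(p)/(p·f(p))` equals `2I·√((1-p)/p)` a.e., a positive multiple of
Tardos' `g1^T(p) = √((1-p)/p)`. -/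
theorem nu_ge_and_optimal_g1
    (t : ℝ) (ht : t ∈ Set.Ioo (0:ℝ) (1/2))
    (s : ℝ → ℝ) (hs_meas : Measurable s)
    (hs_nonneg : ∀ p ∈ Set.Icc t (1/2 : ℝ), 0 ≤ s p)
    (I : ℝ) (hI : I = ∫ p in Set.Icc t (1/2 : ℝ), s p / Real.sqrt (p * (1 - p)))
    (hI_pos : 0 < I)
    (f : ℝ → ℝ) (hf_meas : Measurable f)
    (hf_pos : ∀ p ∈ Set.Icc t (1/2 : ℝ), 0 < f p)
    (hf_norm : (∫ p in Set.Icc t (1/2 : ℝ), f p) = 1/2) :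
    ENNReal.ofReal (4 * I ^ 2)
      ≤ 2 * ∫⁻ p in Set.Icc t (1/2 : ℝ), ENNReal.ofReal (s p ^ 2 / (p * (1 - p) * f p))
    ∧ ((2 * ∫⁻ p in Set.Icc t (1/2 : ℝ), ENNReal.ofReal (s p ^ 2 / (p * (1 - p) * f p)))
          = ENNReal.ofReal (4 * I ^ 2)
        ↔ (∀ᵐ p ∂(volume.restrict (Set.Icc t (1/2 : ℝ))),
            f p = s p / (2 * I * Real.sqrt (p * (1 - p)))))
    ∧ ((∀ᵐ p ∂(volume.restrict (Set.Icc t (1/2 : ℝ))),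
          f p = s p / (2 * I * Real.sqrt (p * (1 - p)))) →
        (∀ᵐ p ∂(volume.restrict (Set.Icc t (1/2 : ℝ))),
          s p / (p * f p) = 2 * I * Real.sqrt ((1 - p) / p))) := by
  set S : Set ℝ := Set.Icc t (1/2 : ℝ) with hS
  set μ : Measure ℝ := volume.restrict S with hμ
  set a : ℝ → ℝ := fun p => s p / Real.sqrt (p * (1 - p)) with ha_def
  have ha_meas : Measurable a :=
    hs_meas.div ((measurable_id.mul (measurable_const.sub measurable_id)).sqrt)
  have hmem : ∀ᵐ p ∂μ, p ∈ S := ae_restrict_mem measurableSet_Icc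
  have hpfacts : ∀ p ∈ S, 0 < p ∧ 0 < 1 - p ∧ 0 < p * (1 - p) := by
    intro p hp
    have h1 : 0 < p := lt_of_lt_of_le ht.1 hp.1
    have h2 : 0 < 1 - p := by have := hp.2; linarith
    exact ⟨h1, h2, mul_pos h1 h2⟩
  have ha_int : Integrable a μ := by
    by_contra h
    rw [hI, integral_undef h] at hI_pos
    exact lt_irrefl 0 hI_pos
  have hf_int : Integrable f μ := by
    by_contra h
    rw [integral_undef h] at hf_norm
    norm_num at hf_norm
  have ha_nn : 0 ≤ᵐ[μ] a := by
    filter_upwards [hmem] with p hp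
    exact div_nonneg (hs_nonneg p hp) (Real.sqrt_nonneg _)
  have hf_nn : 0 ≤ᵐ[μ] f := by
    filter_upwards [hmem] with p hp
    exact (hf_pos p hp).le
  have hIa : ENNReal.ofReal I = ∫⁻ p, ENNReal.ofReal (a p) ∂μ := by
    rw [hI]; exact ofReal_integral_eq_lintegral_ofReal ha_int ha_nn
  have hIf : ENNReal.ofReal (1/2 : ℝ) = ∫⁻ p, ENNReal.ofReal (f p) ∂μ := by
    rw [← hf_norm]; exact ofReal_integral_eq_lintegral_ofReal hf_int hf_nn
  set g : ℝ → ℝ := fun p => (a p - 2 * I * f p) ^ 2 / f p with hg_def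
  have hg_meas : Measurable g :=
    ((ha_meas.sub (measurable_const.mul hf_meas)).pow_const 2).div hf_meas
  set L : ℝ≥0∞ := ∫⁻ p, ENNReal.ofReal (s p ^ 2 / (p * (1 - p) * f p)) ∂μ with hL
  set Q : ℝ≥0∞ := ∫⁻ p, ENNReal.ofReal (g p) ∂μ with hQ
  -- pointwise identity
  have key : ∀ p ∈ S, s p ^ 2 / (p * (1 - p) * f p) + 4 * I ^ 2 * f p
      = g p + 4 * I * a p := by
    intro p hp
    obtain ⟨h1, h2, h3⟩ := hpfacts p hp
    have hfp := hf_pos p hp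
    have hsne : Real.sqrt (p * (1 - p)) ≠ 0 := by positivity
    simp only [hg_def, ha_def]
    set r := Real.sqrt (p * (1 - p)) with hr
    have hr2 : p * (1 - p) = r ^ 2 := (Real.sq_sqrt h3.le).symm
    rw [hr2]
    field_simp
    ring
  -- integral identity
  have hsum : L + ENNReal.ofReal (2 * I ^ 2) = Q + ENNReal.ofReal (4 * I ^ 2) := by
    have hmeas1 : Measurable fun p => ENNReal.ofReal (s p ^ 2 / (p * (1 - p) * f p)) :=
      ((hs_meas.pow_const 2).div
        ((measurable_id.mul (measurable_const.sub measurable_id)).mul hf_meas)).ennreal_ofReal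
    have hmeasg : Measurable fun p => ENNReal.ofReal (g p) := hg_meas.ennreal_ofReal
    have e1 : (∫⁻ p, (ENNReal.ofReal (s p ^ 2 / (p * (1 - p) * f p))
        + ENNReal.ofReal (4 * I ^ 2 * f p)) ∂μ)
        = ∫⁻ p, (ENNReal.ofReal (g p) + ENNReal.ofReal (4 * I * a p)) ∂μ := by
      refine lintegral_congr_ae ?_
      filter_upwards [hmem] with p hp
      obtain ⟨h1, h2, h3⟩ := hpfacts p hp
      have hfp := hf_pos p hp
      have t1 : 0 ≤ s p ^ 2 / (p * (1 - p) * f p) := by positivity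
      have t2 : 0 ≤ 4 * I ^ 2 * f p := by positivity
      have t3 : 0 ≤ g p := by simp only [hg_def]; positivity
      have t4 : 0 ≤ 4 * I * a p := by
        have hna : 0 ≤ a p := div_nonneg (hs_nonneg p hp) (Real.sqrt_nonneg _)
        positivity
      rw [← ENNReal.ofReal_add t1 t2, ← ENNReal.ofReal_add t3 t4, key p hp]
    rw [lintegral_add_left hmeas1, lintegral_add_left hmeasg] at e1
    have e2 : (∫⁻ p, ENNReal.ofReal (4 * I ^ 2 * f p) ∂μ) = ENNReal.ofReal (2 * I ^ 2) := by
      have hh : ∀ p, ENNReal.ofReal (4 * I ^ 2 * f p)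
          = ENNReal.ofReal (4 * I ^ 2) * ENNReal.ofReal (f p) := fun p =>
        ENNReal.ofReal_mul (by positivity)
      simp_rw [hh]
      rw [lintegral_const_mul _ hf_meas.ennreal_ofReal, ← hIf,
        ← ENNReal.ofReal_mul (by positivity)]
      congr 1
      ring
    have e3 : (∫⁻ p, ENNReal.ofReal (4 * I * a p) ∂μ) = ENNReal.ofReal (4 * I ^ 2) := by
      have hh : ∀ p, ENNReal.ofReal (4 * I * a p)
          = ENNReal.ofReal (4 * I) * ENNReal.ofReal (a p) := fun p =>
        ENNReal.ofReal_mul (by positivity)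
      simp_rw [hh]
      rw [lintegral_const_mul _ ha_meas.ennreal_ofReal, ← hIa,
        ← ENNReal.ofReal_mul (by positivity)]
      ring_nf
    rw [e2, e3] at e1
    exact e1
  have hLQ : L = Q + ENNReal.ofReal (2 * I ^ 2) := by
    have h4 : ENNReal.ofReal (4 * I ^ 2)
        = ENNReal.ofReal (2 * I ^ 2) + ENNReal.ofReal (2 * I ^ 2) := by
      rw [← ENNReal.ofReal_add (by positivity) (by positivity)]; ring_nf
    rw [h4, ← add_assoc] at hsum
    exact (ENNReal.add_left_inj ENNReal.ofReal_ne_top).mp hsum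
  have h2L : 2 * L = 2 * Q + ENNReal.ofReal (4 * I ^ 2) := by
    rw [hLQ, mul_add]
    congr 1
    rw [two_mul, ← ENNReal.ofReal_add (by positivity) (by positivity)]
    ring_nf
  -- Q = 0 iff equality condition
  have hQiff : Q = 0 ↔ (∀ᵐ p ∂μ, f p = s p / (2 * I * Real.sqrt (p * (1 - p)))) := by
    rw [hQ, lintegral_eq_zero_iff hg_meas.ennreal_ofReal]
    constructor
    · intro h
      filter_upwards [h, hmem] with p hp0 hp
      obtain ⟨h1, h2, h3⟩ := hpfacts p hp
      have hfp := hf_pos p hp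
      have hsne : Real.sqrt (p * (1 - p)) ≠ 0 := by positivity
      have hg0 : g p ≤ 0 := by
        simpa [ENNReal.ofReal_eq_zero] using hp0
      have hg0' : (a p - 2 * I * f p) ^ 2 ≤ 0 := by
        rcases div_nonpos_iff.mp hg0 with ⟨-, h''⟩ | ⟨h', -⟩
        · linarith
        · exact h' 
      have heq : a p = 2 * I * f p := by nlinarith [sq_nonneg (a p - 2 * I * f p)]
      simp only [ha_def] at heq
      field_simp at heq ⊢
      linarith [heq]
    · intro h
      filter_upwards [h, hmem] with p hpe hp
      obtain ⟨h1, h2, h3⟩ := hpfacts p hp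
      have hsne : Real.sqrt (p * (1 - p)) ≠ 0 := by positivity
      have hIne : (2 * I) ≠ 0 := by positivity
      have : a p - 2 * I * f p = 0 := by
        simp only [ha_def]
        rw [hpe]
        field_simp
        ring
      simp only [Pi.zero_apply, hg_def, this]
      simp
  refine ⟨?_, ?_, ?_⟩
  · rw [h2L]; exact le_add_self
  · rw [h2L, ← hQiff]
    constructor
    · intro h
      have : 2 * Q + ENNReal.ofReal (4 * I ^ 2) = 0 + ENNReal.ofReal (4 * I ^ 2) := by
        rw [h, zero_add]
      have h2Q := (ENNReal.add_left_inj ENNReal.ofReal_ne_top).mp this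
      simpa using h2Q
    · intro h
      rw [h, mul_zero, zero_add]
  · intro hae
    filter_upwards [hae, hmem] with p hpe hp
    obtain ⟨h1, h2, h3⟩ := hpfacts p hp
    have hfp := hf_pos p hp
    have hsp : Real.sqrt p ≠ 0 := by positivity
    have hsq : Real.sqrt (1 - p) ≠ 0 := by positivity
    have hmul : Real.sqrt (p * (1 - p)) = Real.sqrt p * Real.sqrt (1 - p) :=
      Real.sqrt_mul h1.le _
    have hdiv : Real.sqrt ((1 - p) / p) = Real.sqrt (1 - p) / Real.sqrt p :=
      Real.sqrt_div h2.le p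
    have hspos : 0 < s p := by
      by_contra h
      push_neg at h
      have hs0 : s p = 0 := le_antisymm h (hs_nonneg p hp)
      rw [hpe, hs0] at hfp
      simp at hfp
    rw [hdiv]
    rw [hpe, hmul]
    have hpsq : Real.sqrt p * Real.sqrt p = p := Real.mul_self_sqrt h1.le
    field_simp
    linear_combination hpsq
end

section
/- For every real number u with u ≤ 1.7, one has e^u ≤ 1 + u + u². -/
/-- For every real number `u` with `u ≤ 1.7`, one has `e^u ≤ 1 + u + u²`. -/
theorem exp_le_one_add_add_sq_of_le (u : ℝ) (hu : u ≤ 1.7) :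
    Real.exp u ≤ 1 + u + u ^ 2 := by
  rcases le_or_gt u 0 with h | h
  · -- for u ≤ 0 : exp u ≤ 1/(1-u) ≤ 1+u+u²
    have hpos := (Real.exp_pos u).le
    have h1 : 1 - u ≤ Real.exp (-u) := by
      have := Real.add_one_le_exp (-u); linarith
    have h2 : Real.exp u * Real.exp (-u) = 1 := by
      rw [← Real.exp_add]; simp
    have h3 : Real.exp u * (1 - u) ≤ 1 := by
      calc Real.exp u * (1 - u) ≤ Real.exp u * Real.exp (-u) :=
            mul_le_mul_of_nonneg_left h1 hpos
        _ = 1 := h2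
    nlinarith [mul_nonneg (mul_nonneg (neg_nonneg.2 h) (neg_nonneg.2 h)) (neg_nonneg.2 h)]
  · -- for 0 < u ≤ 1.7 : write u = 2x with x = u/2 ∈ (0, 0.85]
    set x : ℝ := u / 2 with hxdef
    have hx0 : 0 < x := by positivity
    have hx85 : x ≤ 0.85 := by rw [hxdef]; linarith
    have hx1 : |x| ≤ 1 := by rw [abs_of_pos hx0]; linarith
    have hb := Real.exp_bound hx1 (by norm_num : 0 < 3)
    have hsum : ∑ i ∈ Finset.range 3, x ^ i / (Nat.factorial i : ℝ)
        = 1 + x + x ^ 2 / 2 := by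
      simp [Finset.sum_range_succ, Nat.factorial]
      try ring
    rw [hsum] at hb
    have hb' : Real.exp x ≤ 1 + x + x ^ 2 / 2 + 2 / 9 * x ^ 3 := by
      rw [abs_of_pos hx0] at hb
      have := abs_le.1 hb
      have h4 : ((Nat.succ 3 : ℕ) : ℝ) / ((Nat.factorial 3 : ℝ) * ((3:ℕ):ℝ)) = 2 / 9 := by
        norm_num [Nat.factorial]
      rw [h4] at this
      nlinarith [this.2]
    have hq : 0 ≤ 1 + x + x ^ 2 / 2 + 2 / 9 * x ^ 3 := by positivity
    have hexp : Real.exp u = Real.exp x * Real.exp x := by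
      rw [← Real.exp_add, hxdef]; ring_nf
    rw [hexp]
    have hmul : Real.exp x * Real.exp x ≤
        (1 + x + x ^ 2 / 2 + 2 / 9 * x ^ 3) * (1 + x + x ^ 2 / 2 + 2 / 9 * x ^ 3) :=
      mul_le_mul hb' hb' (Real.exp_pos x).le hq
    have hu2 : u = 2 * x := by rw [hxdef]; ring
    rw [hu2]
    nlinarith [hmul, sq_nonneg x, hx0.le, hx85,
      mul_nonneg (mul_nonneg hx0.le hx0.le) hx0.le,
      mul_nonneg (mul_nonneg (mul_nonneg hx0.le hx0.le) hx0.le) hx0.le]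
end

section
/- Let t ∈ (0,1) and let c ≥ 1 be an integer, and let ψ: {0,1,…,c} → [0,1] satisfy ψ(0) = 0 and ψ(c) = 1. Then (1−t)^c − t^c + Σ_{x=1}^{c−1} C(c,x)·ψ(x)·((1−t)^x·t^{c−x} − t^x·(1−t)^{c−x}) ≥ 2·(1−t)^c − 1. Moreover, if t ∈ (0,1/2) and c·t < 1/2, then (2·(1−t)^c − 1)/(π − 4·arcsin(√t)) > (1 − 2·c·t)/π. -/
open Real

/-- for any response function `ψ` with `ψ 0 = 0`, `ψ c = 1` and values in
`[0,1]`, the per-column expected coalition accusation numerator satisfies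
`(1-t)^c - t^c + Σ_{x=1}^{c-1} C(c,x)·ψ(x)·((1-t)^x·t^{c-x} - t^x·(1-t)^{c-x})
  ≥ 2·(1-t)^c - 1`; moreover if `t < 1/2` and `c·t < 1/2` then
`(2·(1-t)^c - 1)/(π - 4·arcsin √t) > (1 - 2·c·t)/π`. -/
theorem coalition_mean_lower_bound
    (t : ℝ) (ht : t ∈ Set.Ioo (0:ℝ) 1) (c : ℕ) (hc : 1 ≤ c)
    (ψ : ℕ → ℝ) (hψ : ∀ x ≤ c, ψ x ∈ Set.Icc (0:ℝ) 1)
    (hψ0 : ψ 0 = 0) (hψc : ψ c = 1) :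
    (2 * (1-t) ^ c - 1
      ≤ (1-t) ^ c - t ^ c
        + ∑ x ∈ Finset.Ioo 0 c,
            (c.choose x : ℝ) * ψ x * ((1-t) ^ x * t ^ (c-x) - t ^ x * (1-t) ^ (c-x)))
    ∧ (t < 1/2 → (c : ℝ) * t < 1/2 →
        (1 - 2 * (c : ℝ) * t) / π
          < (2 * (1-t) ^ c - 1) / (π - 4 * Real.arcsin (Real.sqrt t))) := by
  obtain ⟨ht0, ht1⟩ := ht
  have ht0' : (0:ℝ) ≤ t := le_of_lt ht0
  have ht1' : (0:ℝ) ≤ 1 - t := by linarith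
  constructor
  · -- binomial identity
    have hbin : ∑ x ∈ Finset.range (c+1),
        t ^ x * (1-t) ^ (c-x) * (c.choose x : ℝ) = 1 := by
      have := add_pow t (1-t) c
      rw [show t + (1-t) = 1 by ring, one_pow] at this
      exact this.symm
    have hsplit : Finset.range (c+1) = insert c (insert 0 (Finset.Ioo 0 c)) := by
      rw [Finset.Ioo_insert_left (Nat.pos_of_ne_zero (by omega))]
      ext x
      simp [Finset.mem_Ico, Nat.lt_succ_iff]
      omega
    have hne : c ∉ insert 0 (Finset.Ioo 0 c) := by simp; omega
    have hne0 : (0:ℕ) ∉ Finset.Ioo 0 c := by simp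
    rw [hsplit, Finset.sum_insert hne, Finset.sum_insert hne0] at hbin
    simp only [Nat.choose_self, Nat.choose_zero_right, Nat.sub_self, pow_zero,
      Nat.sub_zero, Nat.cast_one, mul_one, one_mul] at hbin
    -- hbin : t^c + ((1-t)^c + Σ_{Ioo} t^x (1-t)^(c-x) C) = 1
    have hterm : ∀ x ∈ Finset.Ioo 0 c,
        -(t ^ x * (1-t) ^ (c-x) * (c.choose x : ℝ))
          ≤ (c.choose x : ℝ) * ψ x * ((1-t) ^ x * t ^ (c-x) - t ^ x * (1-t) ^ (c-x)) := by
      intro x hx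
      simp only [Finset.mem_Ioo] at hx
      obtain ⟨hψ0', hψ1'⟩ := hψ x (le_of_lt hx.2)
      have hA : (0:ℝ) ≤ (1-t) ^ x * t ^ (c-x) := by positivity
      have hB : (0:ℝ) ≤ t ^ x * (1-t) ^ (c-x) := by positivity
      have hC : (0:ℝ) ≤ (c.choose x : ℝ) := by positivity
      nlinarith [mul_nonneg (mul_nonneg hC hψ0') hA,
        mul_le_mul_of_nonneg_left (mul_le_mul_of_nonneg_right hψ1' hB) hC]
    have hge := Finset.sum_le_sum hterm
    rw [Finset.sum_neg_distrib] at hge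
    linarith
  · intro ht2 hct
    have hs0 : (0:ℝ) < Real.sqrt t := Real.sqrt_pos.mpr ht0
    have ha0 : 0 < Real.arcsin (Real.sqrt t) := Real.arcsin_pos.mpr hs0
    have halt : Real.arcsin (Real.sqrt t) < π / 4 := by
      have h1 : Real.sqrt t < Real.sqrt 2 / 2 := by
        nlinarith [Real.sq_sqrt ht0', Real.sq_sqrt (by norm_num : (0:ℝ) ≤ 2),
          Real.sqrt_nonneg t, Real.sqrt_nonneg 2]
      have hst1 : Real.sqrt t ≤ 1 := Real.sqrt_le_one.mpr (le_of_lt ht1)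
      rw [Real.arcsin_lt_iff_lt_sin ⟨by linarith [Real.sqrt_nonneg t], hst1⟩
        ⟨by linarith [Real.pi_pos], by linarith [Real.pi_pos]⟩, Real.sin_pi_div_four]
      exact h1
    have hden : 0 < π - 4 * Real.arcsin (Real.sqrt t) := by linarith
    have hbern : 1 - (c:ℝ) * t ≤ (1-t) ^ c := by
      have h := one_add_mul_le_pow (a := -t) (by linarith) c
      rw [show (1:ℝ) + -t = 1 - t by ring] at h
      linarith
    have hnum : 0 < 1 - 2 * (c:ℝ) * t := by linarith
    calc (1 - 2 * (c:ℝ) * t) / π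
        < (1 - 2 * (c:ℝ) * t) / (π - 4 * Real.arcsin (Real.sqrt t)) := by
          apply div_lt_div_of_pos_left hnum hden
          linarith
      _ ≤ (2 * (1-t) ^ c - 1) / (π - 4 * Real.arcsin (Real.sqrt t)) := by
          exact (div_le_div_iff_of_pos_right hden).mpr (by linarith)
end

section
/- In the code-generation model with Tardos' accusation functions g1^T, g0^T and any probability density f on [t,1−t], let j ∈ {1,…,n} and let y be any {0,1}^m-valued random variable that is conditionally independent of the row (X_{j1},…,X_{jm}) given (p_1,…,p_m). Then E[S_j] = 0 and E[S_j²] = Σ_{i=1}^m P[y_i = 1] ≤ m; in particular Var(S_j) ≤ m. -/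
open MeasureTheory ProbabilityTheory Real

noncomputable section

/-- Tardos' accusation function `g1`. -/
def g1T (p : ℝ) : ℝ := Real.sqrt ((1 - p) / p)

/-- Tardos' accusation function `g0`. -/
def g0T (p : ℝ) : ℝ := - Real.sqrt (p / (1 - p))

open scoped ENNReal NNReal

namespace TardosAux

variable {tt : ℝ}

def cl (t p : ℝ) : ℝ := max t (min (1 - t) p)

lemma cl_mem (ht : t ∈ Set.Ioo (0:ℝ) (1/2)) (p : ℝ) : cl t p ∈ Set.Icc t (1 - t) := by
  obtain ⟨h0, h2⟩ := ht
  constructor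
  · exact le_max_left _ _
  · apply max_le (by linarith) (le_trans (min_le_left _ _) le_rfl)

lemma cl_eq {p : ℝ} (hp : p ∈ Set.Icc t (1 - t)) : cl t p = p := by
  obtain ⟨h1, h2⟩ := hp
  rw [cl, min_eq_right h2, max_eq_right h1]

lemma measurable_cl : Measurable (cl t) :=
  measurable_const.max (measurable_const.min measurable_id)

lemma E1 (ht : t ∈ Set.Ioo (0:ℝ) (1/2)) {q : ℝ} (hq : q ∈ Set.Icc t (1 - t)) :
    q * g1T q + (1 - q) * g0T q = 0 := by
  obtain ⟨h0, h2⟩ := ht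
  obtain ⟨h1, h3⟩ := hq
  have hq0 : 0 < q := lt_of_lt_of_le h0 h1
  have hq1 : 0 < 1 - q := by linarith
  have e1 : q * g1T q = Real.sqrt (q * (1 - q)) := by
    rw [g1T, show q = Real.sqrt (q ^ 2) by rw [Real.sqrt_sq hq0.le],
      ← Real.sqrt_mul (by positivity)]
    congr 1
    rw [Real.sqrt_sq hq0.le]
    field_simp
  have e2 : (1 - q) * Real.sqrt (q / (1 - q)) = Real.sqrt (q * (1 - q)) := by
    rw [show (1 - q) = Real.sqrt ((1 - q) ^ 2) by rw [Real.sqrt_sq hq1.le],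
      ← Real.sqrt_mul (by positivity)]
    congr 1
    rw [Real.sqrt_sq hq1.le]
    field_simp
  rw [g0T]
  rw [mul_neg, e1, e2]
  ring

lemma E2 (ht : t ∈ Set.Ioo (0:ℝ) (1/2)) {q : ℝ} (hq : q ∈ Set.Icc t (1 - t)) :
    q * (g1T q) ^ 2 + (1 - q) * (g0T q) ^ 2 = 1 := by
  obtain ⟨h0, h2⟩ := ht
  obtain ⟨h1, h3⟩ := hq
  have hq0 : 0 < q := lt_of_lt_of_le h0 h1
  have hq1 : 0 < 1 - q := by linarith
  rw [g1T, g0T, neg_pow, Real.sq_sqrt (by positivity), Real.sq_sqrt (by positivity)]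
  field_simp
  ring

lemma g1T_bound (ht : t ∈ Set.Ioo (0:ℝ) (1/2)) {q : ℝ} (hq : q ∈ Set.Icc t (1 - t)) :
    |g1T q| ≤ Real.sqrt ((1 - t) / t) := by
  obtain ⟨h0, h2⟩ := ht
  obtain ⟨h1, h3⟩ := hq
  have hq0 : 0 < q := lt_of_lt_of_le h0 h1
  rw [g1T, abs_of_nonneg (Real.sqrt_nonneg _)]
  apply Real.sqrt_le_sqrt
  apply div_le_div₀ (by linarith) (by linarith) h0 h1

lemma g0T_bound (ht : t ∈ Set.Ioo (0:ℝ) (1/2)) {q : ℝ} (hq : q ∈ Set.Icc t (1 - t)) :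
    |g0T q| ≤ Real.sqrt ((1 - t) / t) := by
  obtain ⟨h0, h2⟩ := ht
  obtain ⟨h1, h3⟩ := hq
  rw [g0T, abs_neg, abs_of_nonneg (Real.sqrt_nonneg _)]
  apply Real.sqrt_le_sqrt
  apply div_le_div₀ (by linarith) (by linarith) (by linarith) (by linarith)



def vB (q : ℝ) (b : Bool) : ℝ := bif b then q else 1 - q

lemma measurable_vB (b : Bool) : Measurable fun q => vB q b := by
  cases b
  · exact (measurable_const.sub measurable_id : Measurable fun q : ℝ => 1 - q)
  · exact (measurable_id : Measurable fun q : ℝ => q)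

def wnn (n m : ℕ) (p : Fin m → ℝ) (X : Fin n → Fin m → Bool) : ℝ≥0 :=
  ∏ j', ∏ i, Real.toNNReal (vB (p i) (X j' i))

lemma measurable_wnn (n m : ℕ) (X : Fin n → Fin m → Bool) :
    Measurable fun p => (wnn n m p X : ℝ≥0∞) := by
  apply Measurable.coe_nnreal_ennreal
  apply Finset.measurable_prod
  intro j' _
  apply Finset.measurable_prod
  intro i _
  exact (measurable_real_toNNReal.comp ((measurable_vB (X j' i)).comp (measurable_pi_apply i)))

instance bern_finite (q : ℝ) : IsFiniteMeasure (bern q) := by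
  constructor
  simp only [bern, Measure.add_apply, Measure.smul_apply, Measure.dirac_apply, smul_eq_mul]
  simp [ENNReal.add_lt_top]

lemma bern_singleton (q : ℝ) (b : Bool) : bern q {b} = ENNReal.ofReal (vB q b) := by
  cases b <;> simp [bern, vB, Measure.dirac_apply]

def xiRow (m : ℕ) (p : Fin m → ℝ) : Measure (Fin m → Bool) := Measure.pi fun i => bern (p i)

instance (m : ℕ) (p : Fin m → ℝ) : IsFiniteMeasure (xiRow m p) := by
  unfold xiRow; infer_instance

def xiMat (n m : ℕ) (p : Fin m → ℝ) : Measure (Fin n → Fin m → Bool) :=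
  Measure.pi fun _ : Fin n => xiRow m p

instance (n m : ℕ) (p : Fin m → ℝ) : IsFiniteMeasure (xiMat n m p) := by
  unfold xiMat; infer_instance

lemma xiRow_singleton (m : ℕ) (p : Fin m → ℝ) (x : Fin m → Bool) :
    xiRow m p {x} = ∏ i, ENNReal.ofReal (vB (p i) (x i)) := by
  rw [xiRow, ← Set.univ_pi_singleton, Measure.pi_pi]
  exact Finset.prod_congr rfl fun i _ => bern_singleton _ _

lemma xiMat_singleton (n m : ℕ) (p : Fin m → ℝ) (X : Fin n → Fin m → Bool) :
    xiMat n m p {X} = (wnn n m p X : ℝ≥0∞) := by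
  rw [xiMat, ← Set.univ_pi_singleton, Measure.pi_pi, wnn]
  push_cast
  apply Finset.prod_congr rfl fun j' _ => ?_
  rw [xiRow_singleton]
  apply Finset.prod_congr rfl fun i _ => ?_
  rfl

lemma meas_apply_fin {α : Type*} [Fintype α] [MeasurableSpace α] [MeasurableSingletonClass α]
    (μ : Measure α) {A : Set α} (hA : MeasurableSet A) :
    μ A = ∑ a : α, A.indicator (fun _ => (1:ℝ≥0∞)) a * μ {a} := by
  conv_lhs => rw [← Measure.sum_smul_dirac μ]
  rw [Measure.sum_apply _ hA, tsum_fintype]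
  apply Finset.sum_congr rfl fun a _ => ?_
  rw [Measure.smul_apply, Measure.dirac_apply' _ hA, smul_eq_mul, mul_comm]
  rfl

def ker (n m : ℕ) (p : Fin m → ℝ) : Measure ((Fin m → ℝ) × (Fin n → Fin m → Bool)) :=
  (Measure.dirac p).prod (xiMat n m p)

lemma ker_apply (n m : ℕ) (p : Fin m → ℝ)
    {s : Set ((Fin m → ℝ) × (Fin n → Fin m → Bool))} (hs : MeasurableSet s) :
    ker n m p s
      = ∑ X : Fin n → Fin m → Bool,
          ((fun p' => (p', X)) ⁻¹' s).indicator (fun p' => (wnn n m p' X : ℝ≥0∞)) p := by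
  rw [ker, Measure.dirac_prod, Measure.map_apply measurable_prodMk_left hs,
    meas_apply_fin _ (measurable_prodMk_left hs)]
  apply Finset.sum_congr rfl fun X _ => ?_
  rw [xiMat_singleton]
  by_cases h : (p, X) ∈ s
  · rw [Set.indicator_of_mem (show X ∈ Prod.mk p ⁻¹' s from h),
      Set.indicator_of_mem (show p ∈ (fun p' => (p', X)) ⁻¹' s from h), one_mul]
  · rw [Set.indicator_of_notMem (show X ∉ Prod.mk p ⁻¹' s from h),
      Set.indicator_of_notMem (show p ∉ (fun p' => (p', X)) ⁻¹' s from h), zero_mul]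

lemma ker_measurable (n m : ℕ) : Measurable (ker n m) := by
  apply Measure.measurable_of_measurable_coe
  intro s hs
  simp_rw [ker_apply n m _ hs]
  apply Finset.measurable_sum
  intro X _
  exact (measurable_wnn n m X).indicator (measurable_prodMk_right hs)

def comp (n m : ℕ) (f : ℝ → ℝ) (X : Fin n → Fin m → Bool) :
    Measure ((Fin m → ℝ) × (Fin n → Fin m → Bool)) :=
  ((Measure.pi fun _ : Fin m => biasMeasure f).withDensity
    fun p => (wnn n m p X : ℝ≥0∞)).map (fun p => (p, X))

lemma codeMeasure_eq (n m : ℕ) (f : ℝ → ℝ) :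
    codeMeasure n m f = Measure.sum (comp n m f) := by
  ext s hs
  rw [codeMeasure, show (fun p => (Measure.dirac p).prod
      (Measure.pi fun _ : Fin n => Measure.pi fun i : Fin m => bern (p i))) = ker n m from rfl,
    Measure.bind_apply hs (ker_measurable n m).aemeasurable]
  rw [lintegral_congr (fun p => ker_apply n m p hs)]
  rw [lintegral_finset_sum _ (fun X _ =>
    (measurable_wnn n m X).indicator (measurable_prodMk_right hs))]
  rw [Measure.sum_apply _ hs, tsum_fintype]
  apply Finset.sum_congr rfl fun X _ => ?_
  rw [comp, Measure.map_apply measurable_prodMk_right hs,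
    withDensity_apply _ (measurable_prodMk_right hs), ← lintegral_indicator]
  exact measurable_prodMk_right hs


lemma measurable_wnn' (n m : ℕ) (X : Fin n → Fin m → Bool) :
    Measurable fun p => wnn n m p X := by
  apply Finset.measurable_prod
  intro j' _
  apply Finset.measurable_prod
  intro i _
  exact measurable_real_toNNReal.comp ((measurable_vB (X j' i)).comp (measurable_pi_apply i))

variable {t : ℝ} {f : ℝ → ℝ}

lemma bias_compl_zero (hf_supp : ∀ p, p ∉ Set.Icc t (1-t) → f p = 0) :
    biasMeasure f (Set.Icc t (1-t))ᶜ = 0 := by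
  rw [biasMeasure, withDensity_apply _ measurableSet_Icc.compl,
    setLIntegral_congr_fun (g := fun _ => 0) measurableSet_Icc.compl
      (fun p hp => by simp [hf_supp p hp])]
  simp

lemma pi_ae_box (hf_supp : ∀ p, p ∉ Set.Icc t (1-t) → f p = 0)
    (hf_prob : IsProbabilityMeasure (biasMeasure f)) (m : ℕ) :
    ∀ᵐ p ∂(Measure.pi fun _ : Fin m => biasMeasure f), ∀ i, p i ∈ Set.Icc t (1-t) := by
  rw [ae_all_iff]
  intro i
  rw [ae_iff]
  have hset : {p : Fin m → ℝ | ¬ p i ∈ Set.Icc t (1-t)}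
      = Set.pi Set.univ (fun l => if l = i then (Set.Icc t (1-t))ᶜ else Set.univ) := by
    ext p
    simp only [Set.mem_setOf_eq, Set.mem_pi, Set.mem_univ, forall_true_left]
    constructor
    · intro h l
      by_cases hl : l = i
      · subst hl; simp [h]
      · simp [hl]
    · intro h
      have := h i
      simpa using this
  rw [hset, Measure.pi_pi]
  apply Finset.prod_eq_zero (Finset.mem_univ i)
  simp [bias_compl_zero hf_supp]

lemma sum_wnn {n m : ℕ} (t : ℝ) (ht : t ∈ Set.Ioo (0:ℝ) (1/2)) (p : Fin m → ℝ)
    (hp : ∀ i, p i ∈ Set.Icc t (1-t)) :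
    ∑ X : Fin n → Fin m → Bool, (wnn n m p X : ℝ≥0∞) = 1 := by
  have hpt : ∀ i, 0 ≤ p i ∧ p i ≤ 1 := fun i =>
    ⟨le_trans ht.1.le (hp i).1, le_trans (hp i).2 (by linarith [ht.1])⟩
  have : ∀ X : Fin n → Fin m → Bool, (wnn n m p X : ℝ≥0∞)
      = ∏ j', ∏ i, (ENNReal.ofReal (vB (p i) (X j' i))) := by
    intro X
    rw [wnn]
    push_cast
    rfl
  simp_rw [this]
  rw [← Fintype.prod_sum (fun (j' : Fin n) (x : Fin m → Bool) =>
      ∏ i, ENNReal.ofReal (vB (p i) (x i)))]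
  have hrow : ∀ j' : Fin n, (∑ x : Fin m → Bool, ∏ i, ENNReal.ofReal (vB (p i) (x i))) = 1 := by
    intro j'
    rw [← Fintype.prod_sum (fun (i : Fin m) (b : Bool) => ENNReal.ofReal (vB (p i) b))]
    apply Finset.prod_eq_one
    intro i _
    rw [Fintype.sum_bool]
    rw [show vB (p i) true = p i from rfl, show vB (p i) false = 1 - p i from rfl]
    rw [← ENNReal.ofReal_add (hpt i).1 (by linarith [(hpt i).2])]
    simp
  calc ∏ j' : Fin n, (∑ x : Fin m → Bool, ∏ i, ENNReal.ofReal (vB (p i) (x i)))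
      = ∏ j' : Fin n, 1 := Finset.prod_congr rfl fun j' _ => hrow j'
    _ = 1 := Finset.prod_const_one

lemma codeMeasure_isProb (n m : ℕ) (ht : t ∈ Set.Ioo (0:ℝ) (1/2))
    (hf_supp : ∀ p, p ∉ Set.Icc t (1-t) → f p = 0)
    (hf_prob : IsProbabilityMeasure (biasMeasure f)) :
    IsProbabilityMeasure (codeMeasure n m f) := by
  constructor
  rw [codeMeasure_eq, Measure.sum_apply _ MeasurableSet.univ, tsum_fintype]
  have : ∀ X : Fin n → Fin m → Bool, comp n m f X Set.univ
      = ∫⁻ p, (wnn n m p X : ℝ≥0∞) ∂(Measure.pi fun _ : Fin m => biasMeasure f) := by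
    intro X
    rw [comp, Measure.map_apply measurable_prodMk_right MeasurableSet.univ]
    simp [withDensity_apply _ MeasurableSet.univ]
  simp_rw [this]
  rw [← lintegral_finset_sum _ (fun X _ => measurable_wnn n m X)]
  have h1 : ∫⁻ p, ∑ X : Fin n → Fin m → Bool, (wnn n m p X : ℝ≥0∞)
        ∂(Measure.pi fun _ : Fin m => biasMeasure f)
      = ∫⁻ _, 1 ∂(Measure.pi fun _ : Fin m => biasMeasure f) := by
    apply lintegral_congr_ae
    filter_upwards [pi_ae_box hf_supp hf_prob m] with p hp
    exact sum_wnn t ht p hp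
  rw [h1]
  simp


lemma codeMeasure_bad_zero (n m : ℕ)
    (hf_supp : ∀ p, p ∉ Set.Icc t (1-t) → f p = 0)
    (hf_prob : IsProbabilityMeasure (biasMeasure f)) :
    codeMeasure n m f {q | ¬ ∀ i, q.1 i ∈ Set.Icc t (1-t)} = 0 := by
  have hbadP : MeasurableSet {p : Fin m → ℝ | ¬ ∀ i, p i ∈ Set.Icc t (1-t)} := by
    rw [show {p : Fin m → ℝ | ¬ ∀ i, p i ∈ Set.Icc t (1-t)}
        = ⋃ i, (fun p : Fin m → ℝ => p i) ⁻¹' (Set.Icc t (1-t))ᶜ by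
      ext p; simp]
    exact MeasurableSet.iUnion fun i => (measurable_pi_apply i) measurableSet_Icc.compl
  have hbad : MeasurableSet {q : (Fin m → ℝ) × (Fin n → Fin m → Bool) |
      ¬ ∀ i, q.1 i ∈ Set.Icc t (1-t)} := measurable_fst hbadP
  rw [codeMeasure_eq, Measure.sum_apply _ hbad, tsum_fintype]
  apply Finset.sum_eq_zero
  intro X _
  rw [comp, Measure.map_apply measurable_prodMk_right hbad,
    withDensity_apply _ (measurable_prodMk_right hbad)]
  have hnull : (Measure.pi fun _ : Fin m => biasMeasure f)
      ((fun p => (p, X)) ⁻¹' {q : (Fin m → ℝ) × (Fin n → Fin m → Bool) |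
        ¬ ∀ i, q.1 i ∈ Set.Icc t (1-t)}) = 0 := by
    have := (ae_iff.mp (pi_ae_box hf_supp hf_prob m))
    convert this using 2
    rfl
  exact setLIntegral_measure_zero _ _ hnull

lemma big_ae_box (n m : ℕ)
    (hf_supp : ∀ p, p ∉ Set.Icc t (1-t) → f p = 0)
    (hf_prob : IsProbabilityMeasure (biasMeasure f))
    {Ω' : Type*} [MeasurableSpace Ω'] (μ' : Measure Ω') [IsProbabilityMeasure μ'] :
    ∀ᵐ q ∂((codeMeasure n m f).prod μ'), ∀ i, q.1.1 i ∈ Set.Icc t (1-t) := by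
  rw [ae_iff]
  have hset : {q : ((Fin m → ℝ) × (Fin n → Fin m → Bool)) × Ω' |
        ¬ ∀ i, q.1.1 i ∈ Set.Icc t (1-t)}
      = {q : (Fin m → ℝ) × (Fin n → Fin m → Bool) |
          ¬ ∀ i, q.1 i ∈ Set.Icc t (1-t)} ×ˢ Set.univ := by
    ext q; simp [Set.mem_prod]
  rw [hset, Measure.prod_prod, codeMeasure_bad_zero n m hf_supp hf_prob, zero_mul]

lemma rep (n m : ℕ) (ht : t ∈ Set.Ioo (0:ℝ) (1/2))
    (hf_supp : ∀ p, p ∉ Set.Icc t (1-t) → f p = 0)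
    (hf_prob : IsProbabilityMeasure (biasMeasure f))
    {Ω' : Type*} [MeasurableSpace Ω'] (μ' : Measure Ω') [IsProbabilityMeasure μ']
    (g : ((Fin m → ℝ) × (Fin n → Fin m → Bool)) × Ω' → ℝ) (hg : Measurable g)
    (C : ℝ) (hgb : ∀ q, |g q| ≤ C) :
    ∫ q, g q ∂((codeMeasure n m f).prod μ')
      = ∑ X : Fin n → Fin m → Bool, ∫ p, (wnn n m p X : ℝ) *
          (∫ r, g ((p, X), r) ∂μ') ∂(Measure.pi fun _ : Fin m => biasMeasure f) := by
  haveI := codeMeasure_isProb (t := t) (f := f) n m ht hf_supp hf_prob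
  have h_int : Integrable g ((codeMeasure n m f).prod μ') :=
    ⟨hg.aestronglyMeasurable, HasFiniteIntegral.of_bounded (C := C)
      (Filter.Eventually.of_forall (fun q => by simpa [Real.norm_eq_abs] using hgb q))⟩
  rw [MeasureTheory.integral_prod _ h_int]
  set G : (Fin m → ℝ) × (Fin n → Fin m → Bool) → ℝ := fun w => ∫ r, g (w, r) ∂μ' with hG
  have hGsm : StronglyMeasurable G := hg.stronglyMeasurable.integral_prod_right'
  have hGb : ∀ w, ‖G w‖ ≤ C := by
    intro w
    calc ‖G w‖ ≤ C * (μ' Set.univ).toReal := by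
          apply norm_integral_le_of_norm_le_const
          exact Filter.Eventually.of_forall fun r => by
            simpa [Real.norm_eq_abs] using hgb ((w, r))
      _ = C := by simp
  have hG_int : Integrable G (Measure.sum (comp n m f)) := by
    rw [← codeMeasure_eq]
    exact ⟨hGsm.aestronglyMeasurable, HasFiniteIntegral.of_bounded (C := C)
      (Filter.Eventually.of_forall hGb)⟩
  rw [codeMeasure_eq, integral_sum_measure hG_int, tsum_fintype]
  apply Finset.sum_congr rfl
  intro X _
  rw [comp, integral_map measurable_prodMk_right.aemeasurable hGsm.aestronglyMeasurable,
    integral_withDensity_eq_integral_smul (measurable_wnn' n m X)]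
  apply integral_congr_ae
  apply Filter.Eventually.of_forall
  intro p
  show wnn n m p X • G (p, X) = _
  rw [NNReal.smul_def, smul_eq_mul]


def vR (m : ℕ) (p : Fin m → ℝ) (x : Fin m → Bool) : ℝ := ∏ i, vB (p i) (x i)

lemma vB_sum (q : ℝ) : vB q true + vB q false = 1 := by simp [vB]

lemma sum_mul_pair (m : ℕ) (p : Fin m → ℝ) (c c' : Bool → ℝ) {i0 k0 : Fin m} (hik : i0 ≠ k0) :
    ∑ x : Fin m → Bool, vR m p x * (c (x i0) * c' (x k0))
      = (vB (p i0) true * c true + vB (p i0) false * c false)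
        * (vB (p k0) true * c' true + vB (p k0) false * c' false) := by
  classical
  set d : Fin m → Bool → ℝ := fun l b =>
    vB (p l) b * ((if l = i0 then c b else 1) * (if l = k0 then c' b else 1)) with hd
  have hpt : ∀ x : Fin m → Bool, vR m p x * (c (x i0) * c' (x k0)) = ∏ l, d l (x l) := by
    intro x
    rw [hd]
    simp only
    rw [Finset.prod_mul_distrib, Finset.prod_mul_distrib,
      Finset.prod_ite_eq' Finset.univ i0 (fun l => c (x l)),
      Finset.prod_ite_eq' Finset.univ k0 (fun l => c' (x l))]
    simp [vR]
  simp_rw [hpt]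
  rw [← Fintype.prod_sum d]
  have hfac : ∀ l, (∑ b, d l b) = if l = i0 then
      (vB (p i0) true * c true + vB (p i0) false * c false)
    else if l = k0 then (vB (p k0) true * c' true + vB (p k0) false * c' false)
    else 1 := by
    intro l
    rw [Fintype.sum_bool, hd]
    by_cases h1 : l = i0
    · subst h1
      simp [if_neg hik]
    · by_cases h2 : l = k0
      · subst h2
        simp [h1]
      · simp [h1, h2, vB_sum (p l)]
  simp_rw [hfac]
  rw [← Finset.mul_prod_erase Finset.univ _ (Finset.mem_univ i0), if_pos rfl]
  congr 1
  have : ∀ l ∈ Finset.univ.erase i0,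
      (if l = i0 then (vB (p i0) true * c true + vB (p i0) false * c false)
        else if l = k0 then (vB (p k0) true * c' true + vB (p k0) false * c' false) else 1)
      = (if l = k0 then (vB (p k0) true * c' true + vB (p k0) false * c' false) else 1) := by
    intro l hl
    rw [if_neg (Finset.ne_of_mem_erase hl)]
  rw [Finset.prod_congr rfl this,
    Finset.prod_ite_eq' (Finset.univ.erase i0) k0
      (fun _ => (vB (p k0) true * c' true + vB (p k0) false * c' false)),
    if_pos (Finset.mem_erase.mpr ⟨hik.symm, Finset.mem_univ k0⟩)]

lemma sum_mul_single (m : ℕ) (p : Fin m → ℝ) (c : Bool → ℝ) (i0 : Fin m) :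
    ∑ x : Fin m → Bool, vR m p x * c (x i0)
      = vB (p i0) true * c true + vB (p i0) false * c false := by
  classical
  set d : Fin m → Bool → ℝ := fun l b => vB (p l) b * (if l = i0 then c b else 1) with hd
  have hpt : ∀ x : Fin m → Bool, vR m p x * c (x i0) = ∏ l, d l (x l) := by
    intro x
    rw [hd]
    simp only
    rw [Finset.prod_mul_distrib, Finset.prod_ite_eq' Finset.univ i0 (fun l => c (x l))]
    simp [vR]
  simp_rw [hpt]
  rw [← Fintype.prod_sum d]
  have hfac : ∀ l, (∑ b, d l b) = if l = i0 then
      (vB (p i0) true * c true + vB (p i0) false * c false) else 1 := by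
    intro l
    rw [Fintype.sum_bool, hd]
    by_cases h1 : l = i0
    · subst h1; simp
    · simp [h1, vB_sum (p l)]
  simp_rw [hfac]
  rw [Finset.prod_ite_eq' Finset.univ i0
    (fun _ => (vB (p i0) true * c true + vB (p i0) false * c false)), if_pos (Finset.mem_univ i0)]

lemma sum_vR_one (m : ℕ) (p : Fin m → ℝ) : ∑ x : Fin m → Bool, vR m p x = 1 := by
  rw [show (fun x : Fin m → Bool => vR m p x) = fun x => ∏ i, vB (p i) (x i) from rfl,
    ← Fintype.prod_sum (fun (i : Fin m) (b : Bool) => vB (p i) b)]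
  exact Finset.prod_eq_one fun i _ => by rw [Fintype.sum_bool, vB_sum]

lemma stepc (n m : ℕ) (j : Fin n) (v : (Fin m → Bool) → ℝ) (hv : ∑ x : Fin m → Bool, v x = 1)
    (F : (Fin n → Fin m → Bool) → ℝ) :
    ∑ X : Fin n → Fin m → Bool, (∏ j', v (X j')) * F X
      = ∑ X : Fin n → Fin m → Bool, (∏ j', v (X j'))
          * ∑ x : Fin m → Bool, v x * F (Function.update X j x) := by
  classical
  set Φ : ((Fin n → Fin m → Bool) × (Fin m → Bool)) → ((Fin n → Fin m → Bool) × (Fin m → Bool)) :=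
    fun z => (Function.update z.1 j z.2, z.1 j) with hΦ
  have hinv : Function.Involutive Φ := by
    intro z
    rw [hΦ]
    simp only [Function.update_self, Function.update_idem, Function.update_eq_self]
  set H : ((Fin n → Fin m → Bool) × (Fin m → Bool)) → ℝ :=
    fun z => (∏ j', v (z.1 j')) * (v z.2 * F (Function.update z.1 j z.2)) with hH
  have key : ∀ z, H (Φ z) = (∏ j', v (z.1 j')) * (v z.2 * F z.1) := by
    rintro ⟨X, x⟩
    rw [hH, hΦ]
    simp only [Function.update_self, Function.update_idem, Function.update_eq_self]
    have hw : (∏ j', v (Function.update X j x j')) * v (X j) = (∏ j', v (X j')) * v x := by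
      rw [← Finset.mul_prod_erase Finset.univ (fun j' => v (Function.update X j x j'))
          (Finset.mem_univ j),
        ← Finset.mul_prod_erase Finset.univ (fun j' => v (X j')) (Finset.mem_univ j),
        Function.update_self]
      have herase : ∏ j' ∈ Finset.univ.erase j, v (Function.update X j x j')
          = ∏ j' ∈ Finset.univ.erase j, v (X j') :=
        Finset.prod_congr rfl fun j' hj' => by
          rw [Function.update_of_ne (Finset.ne_of_mem_erase hj')]
      rw [herase]
      ring
    calc (∏ j', v (Function.update X j x j')) * (v (X j) * F X)
        = ((∏ j', v (Function.update X j x j')) * v (X j)) * F X := by ring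
      _ = ((∏ j', v (X j')) * v x) * F X := by rw [hw]
      _ = (∏ j', v (X j')) * (v x * F X) := by ring
  have rhs : ∑ X : Fin n → Fin m → Bool, (∏ j', v (X j'))
        * ∑ x : Fin m → Bool, v x * F (Function.update X j x)
      = ∑ z : (Fin n → Fin m → Bool) × (Fin m → Bool), H z := by
    rw [Fintype.sum_prod_type]
    apply Finset.sum_congr rfl
    intro X _
    rw [Finset.mul_sum]
  rw [rhs, ← Equiv.sum_comp (hinv.toPerm Φ) H]
  have hcoe : ∀ z, H ((hinv.toPerm Φ) z) = H (Φ z) := fun z => rfl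
  rw [Finset.sum_congr rfl (fun z _ => hcoe z),
    Finset.sum_congr rfl (fun z _ => key z), Fintype.sum_prod_type]
  apply Finset.sum_congr rfl
  intro X _
  have hsum : ∑ y : Fin m → Bool, (∏ j', v (X j')) * (v y * F X)
      = (∏ j', v (X j')) * ((∑ y : Fin m → Bool, v y) * F X) := by
    rw [← Finset.mul_sum, ← Finset.sum_mul]
  rw [hsum, hv, one_mul]


section Acc

variable {t : ℝ}

def g1c (t : ℝ) (p : ℝ) : ℝ := g1T (cl t p)

def g0c (t : ℝ) (p : ℝ) : ℝ := g0T (cl t p)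

lemma measurable_g1T : Measurable g1T :=
  Real.continuous_sqrt.measurable.comp ((measurable_const.sub measurable_id).div measurable_id)

lemma measurable_g0T : Measurable g0T := by
  apply Measurable.neg
  exact Real.continuous_sqrt.measurable.comp
    (measurable_id.div (measurable_const.sub measurable_id))

lemma measurable_g1c : Measurable (g1c t) := measurable_g1T.comp measurable_cl

lemma measurable_g0c : Measurable (g0c t) := measurable_g0T.comp measurable_cl

lemma g1c_eq (ht : t ∈ Set.Ioo (0:ℝ) (1/2)) {p : ℝ} (hp : p ∈ Set.Icc t (1-t)) :
    g1c t p = g1T p := by rw [g1c, cl_eq hp]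

lemma g0c_eq (ht : t ∈ Set.Ioo (0:ℝ) (1/2)) {p : ℝ} (hp : p ∈ Set.Icc t (1-t)) :
    g0c t p = g0T p := by rw [g0c, cl_eq hp]

lemma g1c_bound (ht : t ∈ Set.Ioo (0:ℝ) (1/2)) (p : ℝ) :
    |g1c t p| ≤ Real.sqrt ((1-t)/t) := g1T_bound ht (cl_mem ht p)

lemma g0c_bound (ht : t ∈ Set.Ioo (0:ℝ) (1/2)) (p : ℝ) :
    |g0c t p| ≤ Real.sqrt ((1-t)/t) := g0T_bound ht (cl_mem ht p)

lemma acc_congr (ht : t ∈ Set.Ioo (0:ℝ) (1/2)) {m : ℕ} {p : Fin m → ℝ}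
    (hp : ∀ i, p i ∈ Set.Icc t (1-t)) (x y : Fin m → Bool) :
    accusation m (g1c t) (g0c t) p x y = accusation m g1T g0T p x y := by
  apply Finset.sum_congr rfl
  intro i _
  rw [g1c_eq ht (hp i), g0c_eq ht (hp i)]

lemma acc_bound (ht : t ∈ Set.Ioo (0:ℝ) (1/2)) (m : ℕ) (p : Fin m → ℝ) (x y : Fin m → Bool) :
    |accusation m (g1c t) (g0c t) p x y| ≤ m * Real.sqrt ((1-t)/t) := by
  have hB : (0:ℝ) ≤ Real.sqrt ((1-t)/t) := Real.sqrt_nonneg _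
  calc |accusation m (g1c t) (g0c t) p x y|
      ≤ ∑ i : Fin m, |if y i then (if x i then g1c t (p i) else g0c t (p i)) else 0| :=
        Finset.abs_sum_le_sum_abs _ _
    _ ≤ ∑ _i : Fin m, Real.sqrt ((1-t)/t) := by
        apply Finset.sum_le_sum
        intro i _
        by_cases hy : y i
        · rw [if_pos hy]
          by_cases hx : x i
          · rw [if_pos hx]; exact g1c_bound ht (p i)
          · rw [if_neg hx]; exact g0c_bound ht (p i)
        · rw [if_neg hy]; simpa using hB
    _ = m * Real.sqrt ((1-t)/t) := by rw [Finset.sum_const, Finset.card_univ]; simp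

lemma acc_first (ht : t ∈ Set.Ioo (0:ℝ) (1/2)) {m : ℕ} {p : Fin m → ℝ}
    (hp : ∀ i, p i ∈ Set.Icc t (1-t)) (y : Fin m → Bool) :
    ∑ x : Fin m → Bool, vR m p x * accusation m g1T g0T p x y = 0 := by
  simp_rw [accusation, Finset.mul_sum]
  rw [Finset.sum_comm]
  apply Finset.sum_eq_zero
  intro i _
  rw [sum_mul_single m p (fun b => if y i then (if b then g1T (p i) else g0T (p i)) else 0) i]
  by_cases hy : y i
  · simp only [if_pos hy, if_pos rfl]
    have := E1 ht (hp i)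
    simpa [vB] using this
  · simp [if_neg hy]

lemma acc_second (ht : t ∈ Set.Ioo (0:ℝ) (1/2)) {m : ℕ} {p : Fin m → ℝ}
    (hp : ∀ i, p i ∈ Set.Icc t (1-t)) (y : Fin m → Bool) :
    ∑ x : Fin m → Bool, vR m p x * (accusation m g1T g0T p x y)^2
      = ∑ i : Fin m, (if y i then (1:ℝ) else 0) := by
  classical
  set c : Fin m → Bool → ℝ :=
    fun i b => if y i then (if b then g1T (p i) else g0T (p i)) else 0 with hc
  have hsq : ∀ x : Fin m → Bool, (accusation m g1T g0T p x y)^2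
      = ∑ i : Fin m, ∑ k : Fin m, c i (x i) * c k (x k) := by
    intro x
    rw [accusation, sq, Finset.sum_mul_sum]
  have hswap : ∑ x : Fin m → Bool, vR m p x * (accusation m g1T g0T p x y)^2
      = ∑ i : Fin m, ∑ k : Fin m, ∑ x : Fin m → Bool, vR m p x * (c i (x i) * c k (x k)) := by
    simp_rw [hsq, Finset.mul_sum]
    rw [Finset.sum_comm]
    apply Finset.sum_congr rfl
    intro i _
    rw [Finset.sum_comm]
  rw [hswap]
  have hzero : ∀ i, vB (p i) true * c i true + vB (p i) false * c i false = 0 := by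
    intro i
    by_cases hy : y i
    · have := E1 ht (hp i); simp only [hc, if_pos hy]; simpa [vB] using this
    · simp [hc, if_neg hy]
  have hT : ∀ i k : Fin m, (∑ x : Fin m → Bool, vR m p x * (c i (x i) * c k (x k)))
      = if i = k then (if y i then (1:ℝ) else 0) else 0 := by
    intro i k
    by_cases h : i = k
    · subst h
      rw [if_pos rfl]
      rw [sum_mul_single m p (fun b => c i b * c i b) i]
      by_cases hy : y i
      · have := E2 ht (hp i)
        simp only [hc, if_pos hy, vB, Bool.cond_true, Bool.cond_false]
        norm_num
        nlinarith [this]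
      · simp [hc, if_neg hy]
    · rw [if_neg h, sum_mul_pair m p (c i) (c k) h, hzero i, zero_mul]
  simp_rw [hT]
  apply Finset.sum_congr rfl
  intro i _
  rw [Finset.sum_ite_eq _ i (fun k => if y i then (1:ℝ) else 0)]
  simp

lemma wnn_real {n m : ℕ} (ht : t ∈ Set.Ioo (0:ℝ) (1/2)) {p : Fin m → ℝ}
    (hp : ∀ i, p i ∈ Set.Icc t (1-t)) (X : Fin n → Fin m → Bool) :
    (wnn n m p X : ℝ) = ∏ j', vR m p (X j') := by
  rw [wnn]
  push_cast
  apply Finset.prod_congr rfl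
  intro j' _
  rw [vR]
  push_cast
  apply Finset.prod_congr rfl
  intro i _
  apply Real.coe_toNNReal
  have h1 := (hp i).1
  have h2 := (hp i).2
  have h0 := ht.1
  cases hX : X j' i <;> simp [vB] <;> linarith

lemma wnn_le_one {n m : ℕ} (ht : t ∈ Set.Ioo (0:ℝ) (1/2)) {p : Fin m → ℝ}
    (hp : ∀ i, p i ∈ Set.Icc t (1-t)) (X : Fin n → Fin m → Bool) :
    wnn n m p X ≤ 1 := by
  rw [wnn]
  apply Finset.prod_le_one (fun _ _ => zero_le)
  intro j' _
  apply Finset.prod_le_one (fun _ _ => zero_le)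
  intro i _
  rw [← Real.toNNReal_one]
  apply Real.toNNReal_mono
  have h1 := (hp i).1; have h2 := (hp i).2
  rcases (X j' i) with _ | _ <;> simp [vB] <;> linarith [ht.1.le]


lemma key_first (n m : ℕ) (j : Fin n) (ht : t ∈ Set.Ioo (0:ℝ) (1/2)) {p : Fin m → ℝ}
    (hp : ∀ i, p i ∈ Set.Icc t (1-t))
    {Ω' : Type*} [MeasurableSpace Ω'] (μ' : Measure Ω') [IsProbabilityMeasure μ']
    (ρ : (Fin n → Fin m → Bool) → Ω' → (Fin m → Bool))
    (hρm : ∀ X, Measurable fun r => ρ X r)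
    (hρi : ∀ X x r, ρ (Function.update X j x) r = ρ X r) :
    ∑ X : Fin n → Fin m → Bool, (wnn n m p X : ℝ) *
      (∫ r, accusation m (g1c t) (g0c t) p (X j) (ρ X r) ∂μ') = 0 := by
  have hint : ∀ (X : Fin n → Fin m → Bool) (x : Fin m → Bool),
      Integrable (fun r => vR m p x * accusation m (g1c t) (g0c t) p x (ρ X r)) μ' := by
    intro X x
    refine ⟨(((measurable_of_countable
        (fun y => accusation m (g1c t) (g0c t) p x y)).comp (hρm X)).const_mul
          (vR m p x)).aestronglyMeasurable, ?_⟩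
    apply HasFiniteIntegral.of_bounded (C := |vR m p x| * (m * Real.sqrt ((1-t)/t)))
    apply Filter.Eventually.of_forall
    intro r
    rw [Real.norm_eq_abs, abs_mul]
    exact mul_le_mul_of_nonneg_left (acc_bound ht m p x (ρ X r)) (abs_nonneg _)
  have hw : ∀ X : Fin n → Fin m → Bool, (wnn n m p X : ℝ) = ∏ j', vR m p (X j') :=
    fun X => wnn_real ht hp X
  simp_rw [hw]
  rw [stepc n m j (vR m p) (sum_vR_one m p)
    (fun X => ∫ r, accusation m (g1c t) (g0c t) p (X j) (ρ X r) ∂μ')]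
  apply Finset.sum_eq_zero
  intro X _
  have h1 : ∀ x : Fin m → Bool,
      (∫ r, accusation m (g1c t) (g0c t) p (Function.update X j x j)
        (ρ (Function.update X j x) r) ∂μ')
      = ∫ r, accusation m (g1c t) (g0c t) p x (ρ X r) ∂μ' := by
    intro x
    simp only [Function.update_self, hρi]
  have h2 : (∑ x : Fin m → Bool, vR m p x *
      ∫ r, accusation m (g1c t) (g0c t) p x (ρ X r) ∂μ') = 0 := by
    have h3 : ∀ x : Fin m → Bool, vR m p x *
        (∫ r, accusation m (g1c t) (g0c t) p x (ρ X r) ∂μ')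
        = ∫ r, vR m p x * accusation m (g1c t) (g0c t) p x (ρ X r) ∂μ' := by
      intro x
      rw [← integral_const_mul]
    rw [Finset.sum_congr rfl (fun x _ => h3 x),
      ← integral_finset_sum _ (fun x _ => hint X x)]
    have h4 : ∀ r, (∑ x : Fin m → Bool,
        vR m p x * accusation m (g1c t) (g0c t) p x (ρ X r)) = 0 := by
      intro r
      rw [Finset.sum_congr rfl (fun x _ => by rw [acc_congr ht hp x (ρ X r)])]
      exact acc_first ht hp (ρ X r)
    rw [integral_congr_ae (Filter.Eventually.of_forall h4)]
    simp
  rw [show (∑ x : Fin m → Bool, vR m p x *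
      ∫ r, accusation m (g1c t) (g0c t) p (Function.update X j x j)
        (ρ (Function.update X j x) r) ∂μ')
    = (∑ x : Fin m → Bool, vR m p x *
      ∫ r, accusation m (g1c t) (g0c t) p x (ρ X r) ∂μ') from
    Finset.sum_congr rfl (fun x _ => by rw [h1 x]), h2, mul_zero]

lemma key_second (n m : ℕ) (j : Fin n) (ht : t ∈ Set.Ioo (0:ℝ) (1/2)) {p : Fin m → ℝ}
    (hp : ∀ i, p i ∈ Set.Icc t (1-t))
    {Ω' : Type*} [MeasurableSpace Ω'] (μ' : Measure Ω') [IsProbabilityMeasure μ']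
    (ρ : (Fin n → Fin m → Bool) → Ω' → (Fin m → Bool))
    (hρm : ∀ X, Measurable fun r => ρ X r)
    (hρi : ∀ X x r, ρ (Function.update X j x) r = ρ X r) :
    ∑ X : Fin n → Fin m → Bool, (wnn n m p X : ℝ) *
      (∫ r, (accusation m (g1c t) (g0c t) p (X j) (ρ X r))^2 ∂μ')
    = ∑ X : Fin n → Fin m → Bool, (wnn n m p X : ℝ) *
      (∫ r, (∑ i : Fin m, if ρ X r i = true then (1:ℝ) else 0) ∂μ') := by
  have hint : ∀ (X : Fin n → Fin m → Bool) (x : Fin m → Bool),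
      Integrable (fun r => vR m p x * (accusation m (g1c t) (g0c t) p x (ρ X r))^2) μ' := by
    intro X x
    refine ⟨(((measurable_of_countable
        (fun y => (accusation m (g1c t) (g0c t) p x y)^2)).comp (hρm X)).const_mul
          (vR m p x)).aestronglyMeasurable, ?_⟩
    apply HasFiniteIntegral.of_bounded
      (C := |vR m p x| * (m * Real.sqrt ((1-t)/t))^2)
    apply Filter.Eventually.of_forall
    intro r
    rw [Real.norm_eq_abs, abs_mul]
    apply mul_le_mul_of_nonneg_left _ (abs_nonneg _)
    rw [abs_pow]
    exact pow_le_pow_left₀ (abs_nonneg _) (acc_bound ht m p x (ρ X r)) 2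
  have hw : ∀ X : Fin n → Fin m → Bool, (wnn n m p X : ℝ) = ∏ j', vR m p (X j') :=
    fun X => wnn_real ht hp X
  simp_rw [hw]
  rw [stepc n m j (vR m p) (sum_vR_one m p)
    (fun X => ∫ r, (accusation m (g1c t) (g0c t) p (X j) (ρ X r))^2 ∂μ')]
  apply Finset.sum_congr rfl
  intro X _
  congr 1
  have h1 : ∀ x : Fin m → Bool,
      (∫ r, (accusation m (g1c t) (g0c t) p (Function.update X j x j)
        (ρ (Function.update X j x) r))^2 ∂μ')
      = ∫ r, (accusation m (g1c t) (g0c t) p x (ρ X r))^2 ∂μ' := by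
    intro x
    simp only [Function.update_self, hρi]
  have h3 : ∀ x : Fin m → Bool, vR m p x *
      (∫ r, (accusation m (g1c t) (g0c t) p x (ρ X r))^2 ∂μ')
      = ∫ r, vR m p x * (accusation m (g1c t) (g0c t) p x (ρ X r))^2 ∂μ' := by
    intro x
    rw [← integral_const_mul]
  have e1 : (∑ x : Fin m → Bool, vR m p x *
      ∫ r, (accusation m (g1c t) (g0c t) p (Function.update X j x j)
        (ρ (Function.update X j x) r))^2 ∂μ')
      = ∑ x : Fin m → Bool, ∫ r, vR m p x *
          (accusation m (g1c t) (g0c t) p x (ρ X r))^2 ∂μ' :=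
    Finset.sum_congr rfl (fun x _ => by rw [h1 x, h3 x])
  rw [e1, ← integral_finset_sum _ (fun x _ => hint X x)]
  apply integral_congr_ae
  apply Filter.Eventually.of_forall
  intro r
  show (∑ x : Fin m → Bool, vR m p x * (accusation m (g1c t) (g0c t) p x (ρ X r))^2)
      = ∑ i : Fin m, if ρ X r i = true then (1:ℝ) else 0
  have e2 : (∑ x : Fin m → Bool, vR m p x * (accusation m (g1c t) (g0c t) p x (ρ X r))^2)
      = ∑ x : Fin m → Bool, vR m p x * (accusation m g1T g0T p x (ρ X r))^2 :=
    Finset.sum_congr rfl fun x _ => by rw [acc_congr ht hp x (ρ X r)]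
  rw [e2]
  exact acc_second ht hp (ρ X r)

end Acc

end TardosAux

open TardosAux

/-- in the code-generation model with Tardos' accusation functions and any
bias density `f` on `[t,1-t]`, if the pirated word `y` is conditionally independent of
the row of user `j` given the biases `p` (modelled as `y = ρ p X r` with `ρ` not
depending on row `j` of `X`, and `r` independent auxiliary randomness), then
`E[S_j] = 0`, `E[S_j²] = Σ_i P[y_i = 1] ≤ m` and hence `Var S_j ≤ m`. -/
theorem innocent_accusation_moments
    (n m : ℕ) (hn : 1 ≤ n) (hm : 1 ≤ m)
    (t : ℝ) (ht : t ∈ Set.Ioo (0:ℝ) (1/2))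
    (f : ℝ → ℝ) (hf_meas : Measurable f) (hf_nonneg : ∀ p, 0 ≤ f p)
    (hf_supp : ∀ p, p ∉ Set.Icc t (1-t) → f p = 0)
    (hf_prob : IsProbabilityMeasure (biasMeasure f))
    (Ω' : Type*) [MeasurableSpace Ω'] (μ' : Measure Ω') [IsProbabilityMeasure μ']
    (j : Fin n)
    (ρ : (Fin m → ℝ) → (Fin n → Fin m → Bool) → Ω' → (Fin m → Bool))
    (hρ_meas : Measurable
      (fun q : ((Fin m → ℝ) × (Fin n → Fin m → Bool)) × Ω' => ρ q.1.1 q.1.2 q.2))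
    (hρ_indep : ∀ p X X' r, (∀ j' : Fin n, j' ≠ j → X j' = X' j') → ρ p X r = ρ p X' r) :
    (∫ q, accusation m g1T g0T q.1.1 (q.1.2 j) (ρ q.1.1 q.1.2 q.2)
        ∂((codeMeasure n m f).prod μ')) = 0
    ∧ (∫ q, (accusation m g1T g0T q.1.1 (q.1.2 j) (ρ q.1.1 q.1.2 q.2)) ^ 2
        ∂((codeMeasure n m f).prod μ'))
      = ∑ i : Fin m,
          (((codeMeasure n m f).prod μ') {q | ρ q.1.1 q.1.2 q.2 i = true}).toReal
    ∧ (∑ i : Fin m,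
          (((codeMeasure n m f).prod μ') {q | ρ q.1.1 q.1.2 q.2 i = true}).toReal)
        ≤ (m : ℝ)
    ∧ variance (fun q => accusation m g1T g0T q.1.1 (q.1.2 j) (ρ q.1.1 q.1.2 q.2))
        ((codeMeasure n m f).prod μ') ≤ (m : ℝ) := by
  classical
  haveI hCP : IsProbabilityMeasure (codeMeasure n m f) :=
    codeMeasure_isProb n m ht hf_supp hf_prob
  haveI : IsProbabilityMeasure ((codeMeasure n m f).prod μ') := by infer_instance
  set B : ℝ := Real.sqrt ((1-t)/t) with hB
  have hBpos : 0 ≤ B := Real.sqrt_nonneg _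
  have hmBpos : 0 ≤ (m:ℝ) * B := by positivity
  set S : ((Fin m → ℝ) × (Fin n → Fin m → Bool)) × Ω' → ℝ :=
    fun q => accusation m g1T g0T q.1.1 (q.1.2 j) (ρ q.1.1 q.1.2 q.2) with hSdef
  set S' : ((Fin m → ℝ) × (Fin n → Fin m → Bool)) × Ω' → ℝ :=
    fun q => accusation m (g1c t) (g0c t) q.1.1 (q.1.2 j) (ρ q.1.1 q.1.2 q.2) with hS'def
  have hmeas_y : ∀ i : Fin m,
      Measurable fun q : ((Fin m → ℝ) × (Fin n → Fin m → Bool)) × Ω' =>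
        ρ q.1.1 q.1.2 q.2 i := fun i => (measurable_pi_apply i).comp hρ_meas
  have hmeas_acc : ∀ g1 g0 : ℝ → ℝ, Measurable g1 → Measurable g0 →
      Measurable (fun q : ((Fin m → ℝ) × (Fin n → Fin m → Bool)) × Ω' =>
        accusation m g1 g0 q.1.1 (q.1.2 j) (ρ q.1.1 q.1.2 q.2)) := by
    intro g1 g0 hg1 hg0
    show Measurable fun q : ((Fin m → ℝ) × (Fin n → Fin m → Bool)) × Ω' =>
      ∑ i : Fin m, if ρ q.1.1 q.1.2 q.2 i then
        (if q.1.2 j i then g1 (q.1.1 i) else g0 (q.1.1 i)) else 0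
    apply Finset.measurable_sum
    intro i _
    apply Measurable.ite
    · exact (hmeas_y i) (measurableSet_singleton true)
    · apply Measurable.ite
      · have hx : Measurable fun q : ((Fin m → ℝ) × (Fin n → Fin m → Bool)) × Ω' =>
            q.1.2 j i :=
          (measurable_pi_apply i).comp
            ((measurable_pi_apply j).comp (measurable_snd.comp measurable_fst))
        exact hx (measurableSet_singleton true)
      · exact hg1.comp ((measurable_pi_apply i).comp (measurable_fst.comp measurable_fst))
      · exact hg0.comp ((measurable_pi_apply i).comp (measurable_fst.comp measurable_fst))
    · exact measurable_const
  have hS_meas : Measurable S := hmeas_acc _ _ measurable_g1T measurable_g0T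
  have hS'_meas : Measurable S' := hmeas_acc _ _ measurable_g1c measurable_g0c
  have hS'b : ∀ q, |S' q| ≤ (m:ℝ) * B := fun q => acc_bound ht m _ _ _
  have hae := big_ae_box n m hf_supp hf_prob μ'
  have hπbox := pi_ae_box hf_supp hf_prob m
  have hρm : ∀ (p : Fin m → ℝ) (X : Fin n → Fin m → Bool), Measurable fun r => ρ p X r := by
    intro p X
    have h : Measurable fun r : Ω' => (((p, X), r) :
        ((Fin m → ℝ) × (Fin n → Fin m → Bool)) × Ω') := measurable_prodMk_left
    exact hρ_meas.comp h
  have hρu : ∀ (p : Fin m → ℝ) (X : Fin n → Fin m → Bool) (x : Fin m → Bool) (r : Ω'),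
      ρ p (Function.update X j x) r = ρ p X r :=
    fun p X x r => hρ_indep p (Function.update X j x) X r
      (fun j' hj' => Function.update_of_ne hj' x X)
  -- generic integrability of the rep integrand
  have hFint : ∀ (g : ((Fin m → ℝ) × (Fin n → Fin m → Bool)) × Ω' → ℝ),
      Measurable g → ∀ C : ℝ, (∀ q, |g q| ≤ C) → ∀ X : Fin n → Fin m → Bool,
      Integrable (fun p => (wnn n m p X : ℝ) * ∫ r, g ((p,X), r) ∂μ')
        (Measure.pi fun _ : Fin m => biasMeasure f) := by
    intro g hg C hgb X
    have hGsm : StronglyMeasurable fun w : (Fin m → ℝ) × (Fin n → Fin m → Bool) =>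
        ∫ r, g (w, r) ∂μ' := hg.stronglyMeasurable.integral_prod_right'
    constructor
    · exact (((measurable_wnn' n m X).coe_nnreal_real).mul
        (hGsm.measurable.comp measurable_prodMk_right)).aestronglyMeasurable
    · apply HasFiniteIntegral.of_bounded (C := C)
      filter_upwards [hπbox] with p hp
      have h1 : (wnn n m p X : ℝ) ≤ 1 := by
        exact_mod_cast wnn_le_one ht hp X
      have h0 : (0:ℝ) ≤ (wnn n m p X : ℝ) := (wnn n m p X).coe_nonneg
      have h2 : ‖∫ r, g ((p,X), r) ∂μ'‖ ≤ C := by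
        calc ‖∫ r, g ((p,X), r) ∂μ'‖ ≤ C * (μ' Set.univ).toReal := by
              apply norm_integral_le_of_norm_le_const
              exact Filter.Eventually.of_forall fun r => by
                simpa [Real.norm_eq_abs] using hgb ((p, X), r)
          _ = C := by simp
      calc ‖(wnn n m p X : ℝ) * ∫ r, g ((p,X), r) ∂μ'‖
          = |(wnn n m p X : ℝ)| * ‖∫ r, g ((p,X), r) ∂μ'‖ := by
            rw [Real.norm_eq_abs, abs_mul, Real.norm_eq_abs]
        _ ≤ 1 * C := by
            apply mul_le_mul _ h2 (norm_nonneg _) zero_le_one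
            rwa [abs_of_nonneg h0]
        _ = C := one_mul C
  -- FIRST MOMENT
  have hrep1 := rep n m ht hf_supp hf_prob μ' S' hS'_meas ((m:ℝ)*B) hS'b
  have first' : (∫ q, S' q ∂((codeMeasure n m f).prod μ')) = 0 := by
    rw [hrep1, ← integral_finset_sum _ (fun X _ => hFint S' hS'_meas _ hS'b X)]
    have : (∫ p, (∑ X : Fin n → Fin m → Bool,
          (wnn n m p X : ℝ) * ∫ r, S' ((p,X), r) ∂μ')
        ∂(Measure.pi fun _ : Fin m => biasMeasure f))
        = ∫ _, (0:ℝ) ∂(Measure.pi fun _ : Fin m => biasMeasure f) := by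
      apply integral_congr_ae
      filter_upwards [hπbox] with p hp
      exact key_first n m j ht hp μ' (ρ p) (hρm p) (hρu p)
    rw [this]
    simp
  have hSS' : S =ᵐ[(codeMeasure n m f).prod μ'] S' := by
    filter_upwards [hae] with q hq
    exact (acc_congr ht hq _ _).symm
  have first : (∫ q, S q ∂((codeMeasure n m f).prod μ')) = 0 := by
    rw [integral_congr_ae hSS', first']
  -- SECOND MOMENT
  have hg2meas : Measurable (fun q => (S' q)^2) := hS'_meas.pow_const 2
  have hg2b : ∀ q, |(S' q)^2| ≤ ((m:ℝ)*B)^2 := fun q => by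
    rw [abs_pow]
    exact pow_le_pow_left₀ (abs_nonneg _) (hS'b q) 2
  have hrep2 := rep n m ht hf_supp hf_prob μ' (fun q => (S' q)^2) hg2meas (((m:ℝ)*B)^2) hg2b
  set g3 : ((Fin m → ℝ) × (Fin n → Fin m → Bool)) × Ω' → ℝ :=
    fun q => ∑ i : Fin m, if ρ q.1.1 q.1.2 q.2 i = true then (1:ℝ) else 0 with hg3def
  have hg3meas : Measurable g3 := by
    apply Finset.measurable_sum
    intro i _
    exact Measurable.ite ((hmeas_y i) (measurableSet_singleton true))
      measurable_const measurable_const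
  have hg3b : ∀ q, |g3 q| ≤ (m:ℝ) := by
    intro q
    calc |g3 q| ≤ ∑ i : Fin m, |if ρ q.1.1 q.1.2 q.2 i = true then (1:ℝ) else 0| :=
          Finset.abs_sum_le_sum_abs _ _
      _ ≤ ∑ _i : Fin m, (1:ℝ) := by
          apply Finset.sum_le_sum
          intro i _
          by_cases h : ρ q.1.1 q.1.2 q.2 i = true <;> simp [h]
      _ = (m:ℝ) := by simp
  have hrep3 := rep n m ht hf_supp hf_prob μ' g3 hg3meas (m:ℝ) hg3b
  have second' : (∫ q, (S' q)^2 ∂((codeMeasure n m f).prod μ'))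
      = ∫ q, g3 q ∂((codeMeasure n m f).prod μ') := by
    rw [hrep2, hrep3,
      ← integral_finset_sum _ (fun X _ => hFint _ hg2meas _ hg2b X),
      ← integral_finset_sum _ (fun X _ => hFint _ hg3meas _ hg3b X)]
    apply integral_congr_ae
    filter_upwards [hπbox] with p hp
    exact key_second n m j ht hp μ' (ρ p) (hρm p) (hρu p)
  have hsets : ∀ i : Fin m, MeasurableSet {q : ((Fin m → ℝ) × (Fin n → Fin m → Bool)) × Ω' |
      ρ q.1.1 q.1.2 q.2 i = true} := fun i => (hmeas_y i) (measurableSet_singleton true)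
  have g3val : (∫ q, g3 q ∂((codeMeasure n m f).prod μ'))
      = ∑ i : Fin m, (((codeMeasure n m f).prod μ')
          {q | ρ q.1.1 q.1.2 q.2 i = true}).toReal := by
    have hind_int : ∀ i : Fin m, Integrable
        (fun q : ((Fin m → ℝ) × (Fin n → Fin m → Bool)) × Ω' =>
          if ρ q.1.1 q.1.2 q.2 i = true then (1:ℝ) else 0)
        ((codeMeasure n m f).prod μ') := by
      intro i
      refine ⟨(Measurable.ite ((hmeas_y i) (measurableSet_singleton true))
        measurable_const measurable_const).aestronglyMeasurable, ?_⟩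
      apply HasFiniteIntegral.of_bounded (C := (1:ℝ))
      apply Filter.Eventually.of_forall
      intro q
      by_cases h : ρ q.1.1 q.1.2 q.2 i = true <;> simp [h]
    rw [hg3def]
    rw [integral_finset_sum _ (fun i _ => hind_int i)]
    apply Finset.sum_congr rfl
    intro i _
    have hseq : (fun q : ((Fin m → ℝ) × (Fin n → Fin m → Bool)) × Ω' =>
        if ρ q.1.1 q.1.2 q.2 i = true then (1:ℝ) else 0)
        = Set.indicator {q | ρ q.1.1 q.1.2 q.2 i = true} (fun _ => (1:ℝ)) := by
      funext q
      rw [Set.indicator_apply]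
      simp [Set.mem_setOf_eq]
    rw [hseq, integral_indicator_const (1:ℝ) (hsets i), smul_eq_mul, mul_one, measureReal_def]
  have hsq_ae : (fun q => (S q)^2) =ᵐ[(codeMeasure n m f).prod μ'] (fun q => (S' q)^2) := by
    filter_upwards [hSS'] with q hq
    rw [hq]
  have second : (∫ q, (S q)^2 ∂((codeMeasure n m f).prod μ'))
      = ∑ i : Fin m, (((codeMeasure n m f).prod μ')
          {q | ρ q.1.1 q.1.2 q.2 i = true}).toReal := by
    rw [integral_congr_ae hsq_ae, second', g3val]
  -- BOUND
  have third : (∑ i : Fin m, (((codeMeasure n m f).prod μ')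
      {q | ρ q.1.1 q.1.2 q.2 i = true}).toReal) ≤ (m:ℝ) := by
    calc (∑ i : Fin m, (((codeMeasure n m f).prod μ')
          {q | ρ q.1.1 q.1.2 q.2 i = true}).toReal)
        ≤ ∑ _i : Fin m, (1:ℝ) := by
          apply Finset.sum_le_sum
          intro i _
          have h1 : ((codeMeasure n m f).prod μ') {q | ρ q.1.1 q.1.2 q.2 i = true} ≤ 1 :=
            prob_le_one
          have := ENNReal.toReal_mono (by simp) h1
          simpa using this
      _ = (m:ℝ) := by simp
  -- VARIANCE
  have hmem : MemLp S 2 ((codeMeasure n m f).prod μ') := by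
    apply MemLp.of_bound hS_meas.aestronglyMeasurable ((m:ℝ)*B)
    filter_upwards [hae] with q hq
    rw [Real.norm_eq_abs, hSdef]
    have := acc_bound ht m q.1.1 (q.1.2 j) (ρ q.1.1 q.1.2 q.2)
    rwa [acc_congr ht hq] at this
  have hvar : variance S ((codeMeasure n m f).prod μ')
      = (∫ q, (S q)^2 ∂((codeMeasure n m f).prod μ'))
        - (∫ q, S q ∂((codeMeasure n m f).prod μ'))^2 := by
    rw [ProbabilityTheory.variance_eq_sub hmem]
    rfl
  refine ⟨first, second, third, ?_⟩
  rw [show variance (fun q => accusation m g1T g0T q.1.1 (q.1.2 j) (ρ q.1.1 q.1.2 q.2))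
      ((codeMeasure n m f).prod μ') = variance S ((codeMeasure n m f).prod μ') from rfl,
    hvar, first, second]
  simpa using third


end
end
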